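/- arXiv:2006.01616 — 8 statements merged into one kernel-verified Lean document; each statement's English description precedes it below -/
import Mathlib

section
/- For every positive integer n, the open neighborhood graph of the path P_{2n} is isomorphic to the disjoint union of two copies of the path P_n, and the open neighborhood graph of P_{2n+1} is isomorphic to the disjoint union of P_n and P_{n+1}. -/
open SimpleGraph

/-- The open neighborhood graph of `G`: distinct vertices are adjacent iff they have a
common neighbor in `G`. -/
def ong {V : Type*} (G : SimpleGraph V) : SimpleGraph V where
  Adj u v := u ≠ v ∧ ∃ w, G.Adj u w ∧ G.Adj v w
  symm := ⟨by rintro u v ⟨h, w, h1, h2⟩; exact ⟨h.symm, w, h2, h1⟩⟩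
  loopless := ⟨by rintro u ⟨h, -⟩; exact h rfl⟩

/-- A set of vertices is an open packing if no two distinct members have a common neighbor. -/
def IsOpenPacking {V : Type*} (G : SimpleGraph V) (P : Set V) : Prop :=
  ∀ ⦃u⦄, u ∈ P → ∀ ⦃v⦄, v ∈ P → u ≠ v → ∀ w, ¬(G.Adj u w ∧ G.Adj v w)

/-- An independent set of vertices. -/
def IsIndep {V : Type*} (G : SimpleGraph V) (s : Set V) : Prop :=
  s.Pairwise fun u v => ¬ G.Adj u v

/-- All maximal open packings of `G` have the same cardinality. -/
def InU {V : Type*} (G : SimpleGraph V) : Prop :=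
  ∀ P Q : Set V, Maximal (IsOpenPacking G) P → Maximal (IsOpenPacking G) Q →
    P.ncard = Q.ncard

/-- All maximal independent sets of `G` have the same cardinality. -/
def WellCovered {V : Type*} (G : SimpleGraph V) : Prop :=
  ∀ P Q : Set V, Maximal (IsIndep G) P → Maximal (IsIndep G) Q → P.ncard = Q.ncard

/-- A leaf is a vertex with exactly one neighbor. -/
def IsLeaf {V : Type*} (G : SimpleGraph V) (v : V) : Prop :=
  ∃ u, G.neighborSet v = {u}

/-- A support vertex is one adjacent to a leaf. -/
def IsSupport {V : Type*} (G : SimpleGraph V) (s : V) : Prop :=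
  ∃ l, G.neighborSet l = {s}

lemma ong_path_adj {m : ℕ} (u v : Fin m) :
    (ong (pathGraph m)).Adj u v ↔ (u : ℕ) + 2 = v ∨ (v : ℕ) + 2 = u := by
  constructor
  · rintro ⟨hne, w, h1, h2⟩
    rw [pathGraph_adj] at h1 h2
    have : (u : ℕ) ≠ v := fun h => hne (Fin.ext h)
    omega
  · rintro (h | h)
    · have hw : (u : ℕ) + 1 < m := by have := v.isLt; omega
      refine ⟨fun he => by simp [he] at h, ⟨u + 1, hw⟩, ?_, ?_⟩ <;>
        rw [pathGraph_adj] <;> simp <;> omega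
    · have hw : (v : ℕ) + 1 < m := by have := u.isLt; omega
      refine ⟨fun he => by simp [he] at h, ⟨v + 1, hw⟩, ?_, ?_⟩ <;>
        rw [pathGraph_adj] <;> simp <;> omega

def evenOddEquiv (m : ℕ) : Fin m ≃ Fin ((m + 1) / 2) ⊕ Fin (m / 2) where
  toFun v := if h : (v : ℕ) % 2 = 0
    then Sum.inl ⟨(v : ℕ) / 2, by have := v.isLt; omega⟩
    else Sum.inr ⟨(v : ℕ) / 2, by have := v.isLt; omega⟩
  invFun x := match x with
    | Sum.inl i => ⟨2 * i, by have := i.isLt; omega⟩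
    | Sum.inr j => ⟨2 * j + 1, by have := j.isLt; omega⟩
  left_inv v := by
    by_cases h : (v : ℕ) % 2 = 0 <;> simp [h] <;> exact Fin.ext (by simp; omega)
  right_inv x := by
    rcases x with i | j
    · have h : (2 * (i : ℕ)) % 2 = 0 := by omega
      simp only [Fin.val_mk, h, dif_pos]
      exact congrArg Sum.inl (Fin.ext (by simp only [Fin.val_mk]; omega))
    · have h : ¬ (2 * (j : ℕ) + 1) % 2 = 0 := by omega
      simp only [Fin.val_mk, h, dif_neg, not_false_iff]
      exact congrArg Sum.inr (Fin.ext (by simp only [Fin.val_mk]; omega))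

def ongPathIso0 (m : ℕ) :
    ong (pathGraph m) ≃g (pathGraph ((m + 1) / 2) ⊕g pathGraph (m / 2)) where
  toEquiv := evenOddEquiv m
  map_rel_iff' := by
    intro u v
    rw [ong_path_adj]
    by_cases hu : (u : ℕ) % 2 = 0 <;> by_cases hv : (v : ℕ) % 2 = 0 <;>
      simp [evenOddEquiv, hu, hv, SimpleGraph.sum_adj, pathGraph_adj] <;> omega

def ongPathIso (a b m : ℕ) (h1 : (m + 1) / 2 = a) (h2 : m / 2 = b) :
    ong (pathGraph m) ≃g (pathGraph a ⊕g pathGraph b) := by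
  subst h1 h2; exact ongPathIso0 m

theorem stmt4 (n : ℕ) (hn : 1 ≤ n) :
    Nonempty (ong (pathGraph (2 * n)) ≃g (pathGraph n ⊕g pathGraph n)) ∧
    Nonempty (ong (pathGraph (2 * n + 1)) ≃g (pathGraph n ⊕g pathGraph (n + 1))) := by
  exact ⟨⟨ongPathIso n n (2 * n) (by omega) (by omega)⟩,
    ⟨(ongPathIso (n + 1) n (2 * n + 1) (by omega) (by omega)).trans Iso.sumComm⟩⟩
end

section
/- The path P_n has all of its maximal open packings of equal cardinality if and only if n ∈ {1, 2, 3, 4, 8}. -/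
open SimpleGraph

section Aux

def D2F {n : ℕ} (F : Finset (Fin n)) : Prop :=
  ∀ u ∈ F, ∀ v ∈ F, (u : ℕ) + 2 ≠ (v : ℕ)
instance {n} (F : Finset (Fin n)) : Decidable (D2F F) := by unfold D2F; infer_instance
def MaxD2F {n : ℕ} (F : Finset (Fin n)) : Prop :=
  D2F F ∧ ∀ x, x ∉ F → ¬ D2F (insert x F)
instance {n} (F : Finset (Fin n)) : Decidable (MaxD2F F) := by unfold MaxD2F; infer_instance

lemma op_iff {n : ℕ} (P : Set (Fin n)) :
    IsOpenPacking (pathGraph n) P ↔ ∀ u ∈ P, ∀ v ∈ P, (u : ℕ) + 2 ≠ (v : ℕ) := by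
  constructor
  · intro h u hu v hv he
    have hne : u ≠ v := by intro e; subst e; omega
    have hlt : (u : ℕ) + 1 < n := by have := v.isLt; omega
    exact h hu hv hne ⟨(u : ℕ) + 1, hlt⟩
      ⟨pathGraph_adj.2 (Or.inl rfl), pathGraph_adj.2 (Or.inr (by simp; omega))⟩
  · intro h u hu v hv hne w hw
    simp only [pathGraph_adj] at hw
    have h1 := h u hu v hv
    have h2 := h v hv u hu
    have h3 : (u : ℕ) ≠ (v : ℕ) := fun e => hne (Fin.ext e)
    rcases hw with ⟨ha, hb⟩
    omega

lemma maximalOP_iff {n : ℕ} (P : Set (Fin n)) :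
    Maximal (IsOpenPacking (pathGraph n)) P ↔
      ((∀ u ∈ P, ∀ v ∈ P, (u : ℕ) + 2 ≠ (v : ℕ)) ∧
        ∀ x ∉ P, ¬(∀ u ∈ insert x P, ∀ v ∈ insert x P, (u : ℕ) + 2 ≠ (v : ℕ))) := by
  constructor
  · intro h
    refine ⟨(op_iff P).1 h.1, fun x hx hins => hx ?_⟩
    have : insert x P ⊆ P := h.2 ((op_iff _).2 hins) (Set.subset_insert x P)
    exact this (Set.mem_insert x P)
  · rintro ⟨h1, h2⟩
    refine ⟨(op_iff P).2 h1, fun Q hQ hPQ x hxQ => ?_⟩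
    by_contra hxP
    exact h2 x hxP fun u hu v hv =>
      ((op_iff Q).1 hQ) u (by rcases hu with h | h
                              exacts [h ▸ hxQ, hPQ h])
        v (by rcases hv with h | h
              exacts [h ▸ hxQ, hPQ h])

lemma allsame {n c : ℕ} (h : ∀ F : Finset (Fin n), MaxD2F F → F.card = c) :
    InU (pathGraph n) := by
  have key : ∀ P : Set (Fin n), Maximal (IsOpenPacking (pathGraph n)) P → P.ncard = c := by
    intro P hP
    obtain ⟨h1, h2⟩ := (maximalOP_iff P).1 hP
    have hfin := Set.toFinite P
    have hPF : ∀ y, y ∈ hfin.toFinset ↔ y ∈ P := fun y => Set.Finite.mem_toFinset hfin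
    have hcard : P.ncard = hfin.toFinset.card := by
      rw [← Set.ncard_coe_finset, hfin.coe_toFinset]
    rw [hcard]
    apply h
    constructor
    · intro u hu v hv; exact h1 u ((hPF u).1 hu) v ((hPF v).1 hv)
    · intro x hx hD
      apply h2 x (fun hxP => hx ((hPF x).2 hxP))
      intro u hu v hv
      apply hD
      · rcases hu with h | h
        · rw [h]; exact Finset.mem_insert_self x _
        · exact Finset.mem_insert_of_mem ((hPF u).2 h)
      · rcases hv with h | h
        · rw [h]; exact Finset.mem_insert_self x _
        · exact Finset.mem_insert_of_mem ((hPF v).2 h)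
  intro P Q hP hQ; rw [key P hP, key Q hQ]

lemma c1 : ∀ F : Finset (Fin 1), MaxD2F F → F.card = 1 := by decide
lemma c2 : ∀ F : Finset (Fin 2), MaxD2F F → F.card = 2 := by decide
lemma c3 : ∀ F : Finset (Fin 3), MaxD2F F → F.card = 2 := by decide
lemma c4 : ∀ F : Finset (Fin 4), MaxD2F F → F.card = 2 := by decide
set_option maxRecDepth 40000 in
lemma c8 : ∀ F : Finset (Fin 8), MaxD2F F → F.card = 4 := by decide

lemma card_filter_val {n : ℕ} (p : ℕ → Prop) [DecidablePred p] :
    ((Finset.univ : Finset (Fin n)).filter fun x => p x.val).card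
      = ((Finset.range n).filter p).card := by
  refine Finset.card_bij (fun (a : Fin n) _ => (a : ℕ)) ?_ ?_ ?_
  · intro a ha; simp only [Finset.mem_filter, Finset.mem_range, Finset.mem_univ, true_and] at ha ⊢
    exact ⟨a.isLt, ha⟩
  · intro a _ b _ h; exact Fin.ext h
  · intro b hb
    simp only [Finset.mem_filter, Finset.mem_range] at hb
    exact ⟨⟨b, hb.1⟩, by simp [hb.2], rfl⟩

lemma gcount (m : ℕ) :
    ((Finset.range m).filter fun x => x % 4 < 2).card = 2 * (m / 4) + min (m % 4) 2 := by
  induction m with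
  | zero => simp
  | succ k ih =>
    rw [Finset.range_add_one, Finset.filter_insert]
    by_cases h : k % 4 < 2
    · rw [if_pos h, Finset.card_insert_of_notMem (by simp), ih]; omega
    · rw [if_neg h, ih]; omega

lemma hcount (m : ℕ) :
    ((Finset.range m).filter fun x => x % 6 = 2 ∨ x % 6 = 3).card
      = 2 * (m / 6) + (min (m % 6) 4 - min (m % 6) 2) := by
  induction m with
  | zero => simp
  | succ k ih =>
    rw [Finset.range_add_one, Finset.filter_insert]
    by_cases h : k % 6 = 2 ∨ k % 6 = 3
    · rw [if_pos h, Finset.card_insert_of_notMem (by simp), ih]; omega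
    · rw [if_neg h, ih]; omega

lemma tcard {n : ℕ} (h5 : 5 ≤ n) :
    ((Finset.range n).filter fun x => n ≤ x + 2 ∧ x % 6 < 2).card
      = (if (n-2) % 6 < 2 then 1 else 0) + (if (n-1) % 6 < 2 then 1 else 0) := by
  have he : (Finset.range n).filter (fun x => n ≤ x + 2 ∧ x % 6 < 2)
      = ({n-2, n-1} : Finset ℕ).filter (fun x => x % 6 < 2) := by
    ext x
    simp only [Finset.mem_filter, Finset.mem_range, Finset.mem_insert, Finset.mem_singleton]
    omega
  have hne : n - 2 ≠ n - 1 := by omega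
  rw [he, Finset.filter_insert, Finset.filter_singleton]
  split_ifs <;> simp [Finset.card_insert_of_notMem, hne]

lemma not_inU {n : ℕ} (h5 : 5 ≤ n) (h8 : n ≠ 8) : ¬ InU (pathGraph n) := by
  intro h
  have hA : Maximal (IsOpenPacking (pathGraph n))
      {x : Fin n | (x : ℕ) % 4 < 2} := by
    rw [maximalOP_iff]
    constructor
    · intro u hu v hv
      simp only [Set.mem_setOf_eq] at hu hv
      omega
    · intro x hx hD
      simp only [Set.mem_setOf_eq, not_lt] at hx
      have hlt : (x : ℕ) - 2 < n := by have := x.isLt; omega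
      exact hD ⟨(x : ℕ) - 2, hlt⟩ (Or.inr (by show ((x:ℕ)-2) % 4 < 2; omega))
        x (Or.inl rfl) (show (x:ℕ) - 2 + 2 = (x:ℕ) by omega)
  have hB : Maximal (IsOpenPacking (pathGraph n))
      {x : Fin n | (x:ℕ) % 6 = 2 ∨ (x:ℕ) % 6 = 3 ∨ (n ≤ (x:ℕ) + 2 ∧ (x:ℕ) % 6 < 2)} := by
    rw [maximalOP_iff]
    constructor
    · intro u hu v hv
      simp only [Set.mem_setOf_eq] at hu hv
      have := v.isLt
      omega
    · intro x hx hD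
      simp only [Set.mem_setOf_eq] at hx
      push_neg at hx
      have hcase : 4 ≤ (x:ℕ) % 6 ∨ ((x:ℕ) % 6 < 2 ∧ (x:ℕ) + 2 < n) := by omega
      rcases hcase with hc | hc
      · have hlt : (x : ℕ) - 2 < n := by have := x.isLt; omega
        exact hD ⟨(x : ℕ) - 2, hlt⟩
          (Or.inr (by show ((x:ℕ)-2) % 6 = 2 ∨ ((x:ℕ)-2) % 6 = 3 ∨ _; omega))
          x (Or.inl rfl) (show (x:ℕ) - 2 + 2 = (x:ℕ) by omega)
      · exact hD x (Or.inl rfl) ⟨(x:ℕ) + 2, hc.2⟩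
          (Or.inr (by show ((x:ℕ)+2) % 6 = 2 ∨ ((x:ℕ)+2) % 6 = 3 ∨ _; omega))
          rfl
  have hcard := h _ _ hA hB
  have eA : {x : Fin n | (x : ℕ) % 4 < 2}
      = ↑((Finset.univ : Finset (Fin n)).filter fun x : Fin n => (x:ℕ) % 4 < 2) := by
    ext x; simp
  have eB : {x : Fin n | (x:ℕ) % 6 = 2 ∨ (x:ℕ) % 6 = 3 ∨ (n ≤ (x:ℕ) + 2 ∧ (x:ℕ) % 6 < 2)}
      = ↑((Finset.univ : Finset (Fin n)).filter
          fun x : Fin n => (x:ℕ) % 6 = 2 ∨ (x:ℕ) % 6 = 3 ∨ (n ≤ (x:ℕ) + 2 ∧ (x:ℕ) % 6 < 2)) := by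
    ext x; simp
  rw [eA, eB, Set.ncard_coe_finset, Set.ncard_coe_finset,
    card_filter_val (fun x => x % 4 < 2),
    card_filter_val (fun x => x % 6 = 2 ∨ x % 6 = 3 ∨ (n ≤ x + 2 ∧ x % 6 < 2))] at hcard
  have hsplit : ((Finset.range n).filter
        fun x => x % 6 = 2 ∨ x % 6 = 3 ∨ (n ≤ x + 2 ∧ x % 6 < 2))
      = ((Finset.range n).filter fun x => x % 6 = 2 ∨ x % 6 = 3)
        ∪ ((Finset.range n).filter fun x => n ≤ x + 2 ∧ x % 6 < 2) := by
    ext x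
    simp only [Finset.mem_filter, Finset.mem_union, Finset.mem_range]
    tauto
  have hdisj : Disjoint ((Finset.range n).filter fun x => x % 6 = 2 ∨ x % 6 = 3)
      ((Finset.range n).filter fun x => n ≤ x + 2 ∧ x % 6 < 2) := by
    rw [Finset.disjoint_left]
    intro a ha hb
    simp only [Finset.mem_filter] at ha hb
    omega
  rw [hsplit, Finset.card_union_of_disjoint hdisj, gcount, hcount, tcard h5] at hcard
  split_ifs at hcard <;> omega

end Aux

set_option maxRecDepth 10000 in
theorem stmt5 (n : ℕ) (hn : 1 ≤ n) :
    InU (pathGraph n) ↔ n ∈ ({1, 2, 3, 4, 8} : Set ℕ) := by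
  constructor
  · intro h
    by_contra hmem
    have h5 : 5 ≤ n ∧ n ≠ 8 := by
      simp only [Set.mem_insert_iff, Set.mem_singleton_iff] at hmem
      push_neg at hmem
      omega
    exact not_inU h5.1 h5.2 h
  · intro hmem
    simp only [Set.mem_insert_iff, Set.mem_singleton_iff] at hmem
    rcases hmem with rfl | rfl | rfl | rfl | rfl
    · exact allsame c1
    · exact allsame c2
    · exact allsame c3
    · exact allsame c4
    · exact allsame c8
end

section
/- The cycle C_n has all of its maximal open packings of equal cardinality if and only if n ∈ {3, 4, 5, 6, 7, 8, 10, 14}. -/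
open SimpleGraph
open Fin.CommRing

section Cycle

variable {m : ℕ}

lemma my_adj_iff {u v : Fin (m+3)} : (cycleGraph (m+3)).Adj u v ↔ v = u - 1 ∨ v = u + 1 := by
  have : ∀ u v : Fin (m+3), (cycleGraph (m+3)).Adj u v ↔ u - v = 1 ∨ v - u = 1 := by
    intro u v; exact cycleGraph_adj (n := m+1)
  rw [this]
  constructor
  · rintro (h | h)
    · left; rw [← h]; ring
    · right; rw [← h]; ring
  · rintro (rfl | rfl)
    · left; ring
    · right; ring

lemma fin_two_ne_zero : (2 : Fin (m+3)) ≠ 0 := by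
  intro h
  have h2 : ((2 : Fin (m+3))).val = 2 := rfl
  rw [h] at h2
  simp at h2

lemma common_nbr {u v : Fin (m+3)} (huv : u ≠ v) :
    (∃ w, (cycleGraph (m+3)).Adj u w ∧ (cycleGraph (m+3)).Adj v w) ↔ (v = u + 2 ∨ v = u - 2) := by
  constructor
  · rintro ⟨w, hw1, hw2⟩
    rw [my_adj_iff] at hw1 hw2
    rcases hw1 with rfl | rfl <;> rcases hw2 with h | h
    · exact absurd (by linear_combination h) huv
    · right; linear_combination -h
    · left; linear_combination -h
    · exact absurd (by linear_combination h) huv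
  · rintro (rfl | rfl)
    · exact ⟨u + 1, by rw [my_adj_iff]; right; rfl, by rw [my_adj_iff]; left; ring⟩
    · exact ⟨u - 1, by rw [my_adj_iff]; left; rfl, by rw [my_adj_iff]; right; ring⟩

lemma L1 (P : Set (Fin (m+3))) :
    Maximal (IsOpenPacking (cycleGraph (m+3))) P ↔
      ((∀ i, i ∈ P → i + 2 ∉ P) ∧ (∀ i, i ∉ P → i + 2 ∈ P ∨ i - 2 ∈ P)) := by
  have hne : ∀ i : Fin (m+3), i ≠ i + 2 := by
    intro i h; exact fin_two_ne_zero (left_eq_add.mp h)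
  have hne' : ∀ i : Fin (m+3), i ≠ i - 2 := by
    intro i h; exact fin_two_ne_zero (by
      have := h.symm; rwa [sub_eq_self] at this)
  constructor
  · rintro ⟨hpack, hmax⟩
    constructor
    · intro i hi hcon
      exact hpack hi hcon (hne i) (i + 1)
        ⟨by rw [my_adj_iff]; right; rfl, by rw [my_adj_iff]; left; ring⟩
    · intro i hi
      by_contra hcon
      push_neg at hcon
      obtain ⟨h1, h2⟩ := hcon
      have hins : IsOpenPacking (cycleGraph (m+3)) (insert i P) := by
        intro u hu v hv huv w hw
        rcases hu with rfl | hu <;> rcases hv with rfl | hv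
        · exact huv rfl
        · rcases (common_nbr huv).mp ⟨w, hw.1, hw.2⟩ with h | h
          · exact h1 (h ▸ hv)
          · exact h2 (h ▸ hv)
        · rcases (common_nbr huv).mp ⟨w, hw.1, hw.2⟩ with h | h
          · exact h2 (by rw [h]; show u + 2 - 2 ∈ P; rw [add_sub_cancel_right]; exact hu)
          · exact h1 (by rw [h]; show u - 2 + 2 ∈ P; rw [sub_add_cancel]; exact hu)
        · exact hpack hu hv huv w hw
      have := hmax hins (Set.subset_insert i P) (Set.mem_insert i P)
      exact hi this
  · rintro ⟨h1, h2⟩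
    have hpack : IsOpenPacking (cycleGraph (m+3)) P := by
      intro u hu v hv huv w hw
      rcases (common_nbr huv).mp ⟨w, hw.1, hw.2⟩ with h | h
      · exact h1 u hu (h ▸ hv)
      · exact h1 v hv (by rw [h]; show u - 2 + 2 ∈ P; rw [sub_add_cancel]; exact hu)
    refine ⟨hpack, fun Q hQ hPQ x hx => ?_⟩
    by_contra hx'
    rcases h2 x hx' with h | h
    · exact hQ hx (hPQ h) (hne x) (x + 1)
        ⟨by rw [my_adj_iff]; right; rfl, by rw [my_adj_iff]; left; ring⟩
    · exact hQ hx (hPQ h) (hne' x) (x - 1)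
        ⟨by rw [my_adj_iff]; left; rfl, by rw [my_adj_iff]; right; ring⟩

end Cycle

section Bounds

variable {m : ℕ}

abbrev pk (s : Finset (Fin (m+3))) : Prop := ∀ i ∈ s, i + 2 ∉ s
abbrev mx (s : Finset (Fin (m+3))) : Prop := ∀ i, i ∉ s → i + 2 ∈ s ∨ i - 2 ∈ s

lemma disj2 {s : Finset (Fin (m+3))} (hp : pk s) :
    Disjoint s (s.image (· + 2)) := by
  rw [Finset.disjoint_left]
  intro i hi himg
  obtain ⟨j, hj, hji⟩ := Finset.mem_image.mp himg
  exact hp j hj (hji ▸ hi)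

lemma bounds_all {s : Finset (Fin (m+3))} (hp : pk s) (hm : mx s) :
    2 * s.card ≤ m + 3 ∧ m + 3 ≤ 3 * s.card := by
  constructor
  · have h1 : (s ∪ s.image (· + 2)).card = 2 * s.card := by
      rw [Finset.card_union_of_disjoint (disj2 hp),
        Finset.card_image_of_injective _ (add_left_injective 2)]
      ring
    calc 2 * s.card = (s ∪ s.image (· + 2)).card := h1.symm
      _ ≤ (Finset.univ : Finset (Fin (m+3))).card := Finset.card_le_card (Finset.subset_univ _)
      _ = m + 3 := by simp
  · have hsub : (Finset.univ : Finset (Fin (m+3))) ⊆ s ∪ s.image (· + 2) ∪ s.image (· - 2) := by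
      intro i _
      by_cases hi : i ∈ s
      · exact Finset.mem_union_left _ (Finset.mem_union_left _ hi)
      · rcases hm i hi with h | h
        · refine Finset.mem_union_right _ (Finset.mem_image.mpr ⟨i + 2, h, ?_⟩)
          ring
        · refine Finset.mem_union_left _ (Finset.mem_union_right _ (Finset.mem_image.mpr ⟨i - 2, h, ?_⟩))
          ring
    calc m + 3 = (Finset.univ : Finset (Fin (m+3))).card := by simp
      _ ≤ (s ∪ s.image (· + 2) ∪ s.image (· - 2)).card := Finset.card_le_card hsub
      _ ≤ (s ∪ s.image (· + 2)).card + (s.image (· - 2)).card := Finset.card_union_le _ _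
      _ ≤ (s.card + (s.image (· + 2)).card) + (s.image (· - 2)).card := by
          exact Nat.add_le_add_right (Finset.card_union_le _ _) _
      _ = 3 * s.card := by
          rw [Finset.card_image_of_injective _ (add_left_injective 2),
            Finset.card_image_of_injective _ (sub_left_injective)]
          ring

end Bounds

section Parity

variable {m : ℕ}

lemma mod_cases (k n : ℕ) (hn : 0 < n) (h : k < 2*n) :
    k % n = if k < n then k else k - n := by
  split_ifs with hk
  · exact Nat.mod_eq_of_lt hk
  · push_neg at hk
    rw [Nat.mod_eq_sub_mod hk]
    exact Nat.mod_eq_of_lt (by omega)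

lemma val_add_two (i : Fin (m+3)) : (i + 2).val = (i.val + 2) % (m+3) := by
  have h2 : ((2 : Fin (m+3))).val = 2 := rfl
  rw [Fin.add_def, h2]

lemma val_sub_two (i : Fin (m+3)) : (i - 2).val = (m + 1 + i.val) % (m+3) := by
  have h2 : ((2 : Fin (m+3))).val = 2 := rfl
  rw [Fin.sub_def, h2]
  show (m + 3 - 2 + i.val) % (m+3) = _
  congr 1

lemma val_add_one (i : Fin (m+3)) : (i + 1).val = (i.val + 1) % (m+3) := by
  have h1 : ((1 : Fin (m+3))).val = 1 := rfl
  rw [Fin.add_def, h1]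

lemma val_sub_one (i : Fin (m+3)) : (i - 1).val = (m + 2 + i.val) % (m+3) := by
  have h1 : ((1 : Fin (m+3))).val = 1 := rfl
  rw [Fin.sub_def, h1]
  show (m + 3 - 1 + i.val) % (m+3) = _
  congr 1

lemma par_add_two (he : (m+3) % 2 = 0) (i : Fin (m+3)) : (i + 2).val % 2 = i.val % 2 := by
  have hi := i.isLt
  have hx : (i.val + 2) % (m+3) = if i.val + 2 < m+3 then i.val + 2 else i.val + 2 - (m+3) :=
    mod_cases _ _ (by omega) (by omega)
  rw [val_add_two, hx]
  split_ifs <;> omega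

lemma par_sub_two (he : (m+3) % 2 = 0) (i : Fin (m+3)) : (i - 2).val % 2 = i.val % 2 := by
  have hi := i.isLt
  have hx : (m + 1 + i.val) % (m+3) = if m + 1 + i.val < m+3 then m + 1 + i.val else m + 1 + i.val - (m+3) :=
    mod_cases _ _ (by omega) (by omega)
  rw [val_sub_two, hx]
  split_ifs <;> omega

lemma Ecard (he : (m+3) % 2 = 0) (r : ℕ) (hr : r < 2) :
    2 * ((Finset.univ : Finset (Fin (m+3))).filter (fun i => i.val % 2 = r)).card = m + 3 := by
  have hfilt : (Finset.univ : Finset (Fin (m+3))).filter (fun a => ¬ a.val % 2 = 0)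
      = (Finset.univ : Finset (Fin (m+3))).filter (fun i => i.val % 2 = 1) :=
    Finset.filter_congr (fun x _ => by omega)
  have hsplit := Finset.card_filter_add_card_filter_not
    (s := (Finset.univ : Finset (Fin (m+3)))) (p := fun i : Fin (m+3) => i.val % 2 = 0)
  rw [hfilt, Finset.card_univ, Fintype.card_fin] at hsplit
  have himg : (Finset.univ : Finset (Fin (m+3))).filter (fun i => i.val % 2 = 1)
      = ((Finset.univ : Finset (Fin (m+3))).filter (fun i => i.val % 2 = 0)).image (· + 1) := by
    ext i
    simp only [Finset.mem_image, Finset.mem_filter, Finset.mem_univ, true_and]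
    constructor
    · intro hi
      refine ⟨i - 1, ?_, by ring⟩
      have hiv := i.isLt
      have hx : (m + 2 + i.val) % (m+3) = if m + 2 + i.val < m+3 then m + 2 + i.val else m + 2 + i.val - (m+3) :=
        mod_cases _ _ (by omega) (by omega)
      rw [val_sub_one, hx]
      split_ifs <;> omega
    · rintro ⟨j, hj, rfl⟩
      have hjv := j.isLt
      have hx : (j.val + 1) % (m+3) = if j.val + 1 < m+3 then j.val + 1 else j.val + 1 - (m+3) :=
        mod_cases _ _ (by omega) (by omega)
      rw [val_add_one, hx]
      split_ifs <;> omega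
  have hcards : ((Finset.univ : Finset (Fin (m+3))).filter (fun i => i.val % 2 = 1)).card
      = ((Finset.univ : Finset (Fin (m+3))).filter (fun i => i.val % 2 = 0)).card := by
    rw [himg, Finset.card_image_of_injective _ (add_left_injective 1)]
  interval_cases r
  · omega
  · omega

lemma bounds_even {s : Finset (Fin (m+3))} (he : (m+3) % 2 = 0) (hp : pk s) (hm : mx s)
    (r : ℕ) (hr : r < 2) :
    4 * (s.filter (fun i => i.val % 2 = r)).card ≤ m + 3 ∧
      m + 3 ≤ 6 * (s.filter (fun i => i.val % 2 = r)).card := by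
  set sr := s.filter (fun i => i.val % 2 = r) with hsr
  set Er := (Finset.univ : Finset (Fin (m+3))).filter (fun i => i.val % 2 = r) with hEr
  have hEcard := Ecard he r hr
  rw [← hEr] at hEcard
  have himgsub : sr.image (· + 2) ⊆ Er := by
    intro i hi
    obtain ⟨j, hj, rfl⟩ := Finset.mem_image.mp hi
    simp only [hEr, Finset.mem_filter, Finset.mem_univ, true_and]
    rw [par_add_two he]
    exact (Finset.mem_filter.mp hj).2
  have hsub2 : sr ∪ sr.image (· + 2) ⊆ Er := by
    apply Finset.union_subset _ himgsub
    intro i hi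
    simp only [hEr, Finset.mem_filter, Finset.mem_univ, true_and]
    exact (Finset.mem_filter.mp hi).2
  have hdisj : Disjoint sr (sr.image (· + 2)) := by
    rw [Finset.disjoint_left]
    intro i hi himg
    obtain ⟨j, hj, hji⟩ := Finset.mem_image.mp himg
    exact hp j (Finset.mem_filter.mp hj).1 (hji ▸ (Finset.mem_filter.mp hi).1)
  constructor
  · have h1 : 2 * sr.card ≤ Er.card := by
      calc 2 * sr.card = (sr ∪ sr.image (· + 2)).card := by
            rw [Finset.card_union_of_disjoint hdisj,
              Finset.card_image_of_injective _ (add_left_injective 2)]; ring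
        _ ≤ Er.card := Finset.card_le_card hsub2
    omega
  · have hcov : Er ⊆ sr ∪ sr.image (· + 2) ∪ sr.image (· - 2) := by
      intro i hi
      have hir : i.val % 2 = r := (Finset.mem_filter.mp hi).2
      by_cases his : i ∈ s
      · exact Finset.mem_union_left _ (Finset.mem_union_left _
          (Finset.mem_filter.mpr ⟨his, hir⟩))
      · rcases hm i his with h | h
        · refine Finset.mem_union_right _ (Finset.mem_image.mpr ⟨i + 2, ?_, by ring⟩)
          refine Finset.mem_filter.mpr ⟨h, ?_⟩
          rw [par_add_two he]; exact hir
        · refine Finset.mem_union_left _ (Finset.mem_union_right _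
            (Finset.mem_image.mpr ⟨i - 2, ?_, by ring⟩))
          refine Finset.mem_filter.mpr ⟨h, ?_⟩
          rw [par_sub_two he]; exact hir
    have h2 : Er.card ≤ 3 * sr.card := by
      calc Er.card ≤ (sr ∪ sr.image (· + 2) ∪ sr.image (· - 2)).card := Finset.card_le_card hcov
        _ ≤ (sr ∪ sr.image (· + 2)).card + (sr.image (· - 2)).card := Finset.card_union_le _ _
        _ ≤ (sr.card + (sr.image (· + 2)).card) + (sr.image (· - 2)).card :=
            Nat.add_le_add_right (Finset.card_union_le _ _) _
        _ = 3 * sr.card := by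
            rw [Finset.card_image_of_injective _ (add_left_injective 2),
              Finset.card_image_of_injective _ (sub_left_injective)]
            ring
    omega

lemma card_split (s : Finset (Fin (m+3))) :
    s.card = (s.filter (fun i => i.val % 2 = 0)).card + (s.filter (fun i => i.val % 2 = 1)).card := by
  have hfilt : s.filter (fun a => ¬ a.val % 2 = 0) = s.filter (fun i => i.val % 2 = 1) :=
    Finset.filter_congr (fun x _ => by omega)
  have h := Finset.card_filter_add_card_filter_not
    (s := s) (p := fun i : Fin (m+3) => i.val % 2 = 0)
  rw [hfilt] at h
  omega

end Parity

section Good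

variable {m : ℕ}

lemma exists_finset {P : Set (Fin (m+3))} (h : Maximal (IsOpenPacking (cycleGraph (m+3))) P) :
    ∃ s : Finset (Fin (m+3)), P = ↑s ∧ pk s ∧ mx s := by
  obtain ⟨h1, h2⟩ := (L1 P).mp h
  refine ⟨P.toFinite.toFinset, (Set.Finite.coe_toFinset _).symm, ?_, ?_⟩
  · intro i hi
    rw [Set.Finite.mem_toFinset] at hi ⊢
    exact h1 i hi
  · intro i hi
    rw [Set.Finite.mem_toFinset] at hi
    rw [Set.Finite.mem_toFinset, Set.Finite.mem_toFinset]
    exact h2 i hi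

lemma L1F {s : Finset (Fin (m+3))} (hp : pk s) (hm : mx s) :
    Maximal (IsOpenPacking (cycleGraph (m+3))) ↑s := by
  rw [L1]
  refine ⟨fun i hi => ?_, fun i hi => ?_⟩
  · rw [Finset.mem_coe] at hi ⊢
    exact hp i hi
  · rw [Finset.mem_coe] at hi
    rw [Finset.mem_coe, Finset.mem_coe]
    exact hm i hi

lemma InU_good (h : m+3 = 3 ∨ m+3 = 4 ∨ m+3 = 5 ∨ m+3 = 6 ∨ m+3 = 7 ∨ m+3 = 8 ∨
    m+3 = 10 ∨ m+3 = 14) : InU (cycleGraph (m+3)) := by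
  intro P Q hP hQ
  obtain ⟨sP, rfl, hpP, hmP⟩ := exists_finset hP
  obtain ⟨sQ, rfl, hpQ, hmQ⟩ := exists_finset hQ
  rw [Set.ncard_coe_finset, Set.ncard_coe_finset]
  by_cases he : (m+3) % 2 = 0
  · have b0P := bounds_even he hpP hmP 0 (by omega)
    have b1P := bounds_even he hpP hmP 1 (by omega)
    have b0Q := bounds_even he hpQ hmQ 0 (by omega)
    have b1Q := bounds_even he hpQ hmQ 1 (by omega)
    have cP := card_split sP
    have cQ := card_split sQ
    omega
  · have bP := bounds_all hpP hmP
    have bQ := bounds_all hpQ hmQ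
    omega

end Good

section Bad

variable {m : ℕ}

lemma not_InU_of_two (s t : Finset (Fin (m+3))) (hps : pk s) (hms : mx s)
    (hpt : pk t) (hmt : mx t) (hne : s.card ≠ t.card) : ¬ InU (cycleGraph (m+3)) := by
  intro h
  have := h ↑s ↑t (L1F hps hms) (L1F hpt hmt)
  rw [Set.ncard_coe_finset, Set.ncard_coe_finset] at this
  exact hne this

def patt (a x : ℕ) : Prop := (x < 4*a ∧ x % 4 < 2) ∨ (4*a ≤ x ∧ (x - 4*a) % 3 = 0)

instance (a x : ℕ) : Decidable (patt a x) := by unfold patt; infer_instance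

def SF (m a : ℕ) : Finset (Fin (m+3)) := Finset.univ.filter (fun i => patt a i.val)

lemma count4 (a : ℕ) : ((Finset.range (4*a)).filter (fun x => patt a x)).card = 2*a := by
  have hcong : ∀ a' : ℕ, a' ≤ a → (Finset.range (4*a')).filter (fun x => patt a x)
      = (Finset.range (4*a')).filter (fun x => x % 4 < 2) := by
    intro a' ha'
    apply Finset.filter_congr
    intro x hx
    rw [Finset.mem_range] at hx
    unfold patt
    constructor
    · intro h; omega
    · intro h; omega
  rw [hcong a le_rfl]
  clear hcong
  induction a with
  | zero => rfl
  | succ a ih =>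
    have h4 : 4*(a+1) = (4*a) + 1 + 1 + 1 + 1 := by ring
    rw [h4, Finset.range_add_one, Finset.range_add_one, Finset.range_add_one, Finset.range_add_one,
      Finset.filter_insert, if_neg (by omega : ¬((4*a+1+1+1) % 4 < 2)),
      Finset.filter_insert, if_neg (by omega : ¬((4*a+1+1) % 4 < 2)),
      Finset.filter_insert, if_pos (by omega : ((4*a+1) % 4 < 2)),
      Finset.filter_insert, if_pos (by omega : ((4*a) % 4 < 2))]
    have hna : (4*a) ∉ (Finset.range (4*a)).filter (fun x => x % 4 < 2) := by
      intro h
      rw [Finset.mem_filter, Finset.mem_range] at h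
      omega
    have hnb : (4*a+1) ∉ insert (4*a) ((Finset.range (4*a)).filter (fun x => x % 4 < 2)) := by
      intro h
      rw [Finset.mem_insert, Finset.mem_filter, Finset.mem_range] at h
      omega
    rw [Finset.card_insert_of_notMem hnb, Finset.card_insert_of_notMem hna, ih]
    ring

lemma count34 (a b : ℕ) :
    ((Finset.range (4*a+3*b)).filter (fun x => patt a x)).card = 2*a + b := by
  induction b with
  | zero =>
    rw [show 4*a+3*0 = 4*a by ring, count4]
    omega
  | succ b ih =>
    have h3 : 4*a+3*(b+1) = (4*a+3*b) + 1 + 1 + 1 := by ring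
    rw [h3, Finset.range_add_one, Finset.range_add_one, Finset.range_add_one,
      Finset.filter_insert, if_neg (by unfold patt; omega : ¬ patt a (4*a+3*b+1+1)),
      Finset.filter_insert, if_neg (by unfold patt; omega : ¬ patt a (4*a+3*b+1)),
      Finset.filter_insert, if_pos (by unfold patt; omega : patt a (4*a+3*b))]
    have hna : (4*a+3*b) ∉ (Finset.range (4*a+3*b)).filter (fun x => patt a x) := by
      intro h
      rw [Finset.mem_filter, Finset.mem_range] at h
      omega
    rw [Finset.card_insert_of_notMem hna, ih]
    omega

lemma SF_card (a b : ℕ) (hab : m+3 = 4*a+3*b) : (SF m a).card = 2*a + b := by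
  have himg : (Finset.range (m+3)).filter (fun x => patt a x) = (SF m a).image Fin.val := by
    ext x
    rw [Finset.mem_filter, Finset.mem_range, Finset.mem_image]
    constructor
    · rintro ⟨hx, hp⟩
      exact ⟨⟨x, hx⟩, Finset.mem_filter.mpr ⟨Finset.mem_univ _, hp⟩, rfl⟩
    · rintro ⟨i, hi, rfl⟩
      exact ⟨i.isLt, (Finset.mem_filter.mp hi).2⟩
  have := count34 a b
  rw [← hab] at this
  rw [himg, Finset.card_image_of_injective _ Fin.val_injective] at this
  exact this

lemma SF_pk (a b : ℕ) (hab : m+3 = 4*a+3*b) : pk (SF m a) := by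
  intro i hi hcon
  rw [SF, Finset.mem_filter] at hi hcon
  have h1 : patt a i.val := hi.2
  have h2 : patt a (i+2).val := hcon.2
  rw [val_add_two] at h2
  have hiv := i.isLt
  have hx : (i.val + 2) % (m+3) = if i.val + 2 < m+3 then i.val + 2 else i.val + 2 - (m+3) :=
    mod_cases _ _ (by omega) (by omega)
  rw [hx] at h2
  unfold patt at h1 h2
  split_ifs at h2 <;> omega

lemma SF_mx (a b : ℕ) (hab : m+3 = 4*a+3*b) : mx (SF m a) := by
  intro i hi
  rw [SF, Finset.mem_filter] at hi
  push_neg at hi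
  have h1 : ¬ patt a i.val := fun h => hi (Finset.mem_univ _) h
  have hiv := i.isLt
  rw [SF, Finset.mem_filter, Finset.mem_filter, val_add_two, val_sub_two]
  have hx : (i.val + 2) % (m+3) = if i.val + 2 < m+3 then i.val + 2 else i.val + 2 - (m+3) :=
    mod_cases _ _ (by omega) (by omega)
  have hy : (m + 1 + i.val) % (m+3) = if m + 1 + i.val < m+3 then m + 1 + i.val
      else m + 1 + i.val - (m+3) := mod_cases _ _ (by omega) (by omega)
  rw [hx, hy]
  simp only [Finset.mem_univ, true_and]
  unfold patt at h1 ⊢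
  split_ifs <;> omega

lemma bad_general (a b : ℕ) (hb : 4 ≤ b) (hab : m+3 = 4*a+3*b) :
    ¬ InU (cycleGraph (m+3)) := by
  have hab2 : m+3 = 4*(a+3)+3*(b-4) := by omega
  apply not_InU_of_two (SF m a) (SF m (a+3))
    (SF_pk a b hab) (SF_mx a b hab) (SF_pk (a+3) (b-4) hab2) (SF_mx (a+3) (b-4) hab2)
  rw [SF_card a b hab, SF_card (a+3) (b-4) hab2]
  omega

end Bad

section Except

lemma bad9 : ¬ InU (cycleGraph (6+3)) :=
  not_InU_of_two (m := 6) {0,3,6} {0,3,4,8}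
    (by decide) (by decide) (by decide) (by decide) (by decide)

lemma bad11 : ¬ InU (cycleGraph (8+3)) :=
  not_InU_of_two (m := 8) {0,4,5,10} {0,1,4,5,8}
    (by decide) (by decide) (by decide) (by decide) (by decide)

lemma bad13 : ¬ InU (cycleGraph (10+3)) :=
  not_InU_of_two (m := 10) {0,1,4,7,10} {0,1,5,6,9,10}
    (by decide) (by decide) (by decide) (by decide) (by decide)

lemma bad17 : ¬ InU (cycleGraph (14+3)) :=
  not_InU_of_two (m := 14) {0,1,4,5,8,11,14} {0,1,6,7,12,13}
    (by decide) (by decide) (by decide) (by decide) (by decide)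

end Except


theorem stmt6 (n : ℕ) (hn : 3 ≤ n) :
    InU (cycleGraph n) ↔ n ∈ ({3, 4, 5, 6, 7, 8, 10, 14} : Set ℕ) := by
  obtain ⟨m, rfl⟩ : ∃ m, n = m+3 := ⟨n-3, by omega⟩
  simp only [Set.mem_insert_iff, Set.mem_singleton_iff]
  constructor
  · intro h
    by_contra hbad
    push_neg at hbad
    obtain ⟨h3, h4, h5, h6, h7, h8, h10, h14⟩ := hbad
    by_cases h9 : m+3 = 9
    · have hm : m = 6 := by omega
      subst hm; exact bad9 h
    · by_cases h11 : m+3 = 11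
      · have hm : m = 8 := by omega
        subst hm; exact bad11 h
      · by_cases h13 : m+3 = 13
        · have hm : m = 10 := by omega
          subst hm; exact bad13 h
        · by_cases h17 : m+3 = 17
          · have hm : m = 14 := by omega
            subst hm; exact bad17 h
          · exact bad_general ((m+3)%3) ((m+3-4*((m+3)%3))/3) (by omega) (by omega) h
  · intro hmem
    exact InU_good (by omega)
end

section
/- Let G be a graph with at least one support vertex such that all maximal open packings of G have the same cardinality. If G' is obtained from G by adding a new vertex w adjacent to a support vertex s of G, then all maximal open packings of G' have the same cardinality. -/
open SimpleGraph

/-- The graph obtained from `G` by adding one new vertex (`none`) adjacent only to `s`. -/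
def addLeaf {V : Type*} (G : SimpleGraph V) (s : V) : SimpleGraph (Option V) :=
  SimpleGraph.fromRel (fun a b =>
    (∃ u v, G.Adj u v ∧ a = some u ∧ b = some v) ∨ (a = none ∧ b = some s))

section
variable {V : Type*} {G : SimpleGraph V} {s : V}
lemma addLeaf_adj_some {u v : V} : (addLeaf G s).Adj (some u) (some v) ↔ G.Adj u v := by
  simp only [addLeaf, fromRel_adj, ne_eq, Option.some.injEq]
  constructor
  · rintro ⟨hne, (⟨a,b,hab,rfl,rfl⟩|⟨h,-⟩)|(⟨a,b,hab,rfl,rfl⟩|⟨h,-⟩)⟩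
    · exact hab
    · exact absurd h (by simp)
    · exact hab.symm
    · exact absurd h (by simp)
  · intro h
    exact ⟨h.ne, Or.inl (Or.inl ⟨u, v, h, rfl, rfl⟩)⟩
lemma addLeaf_adj_none {x : Option V} : (addLeaf G s).Adj none x ↔ x = some s := by
  simp only [addLeaf, fromRel_adj, ne_eq]
  constructor
  · rintro ⟨hne, (⟨a,b,hab,h,-⟩|⟨-,h⟩)|(⟨a,b,hab,-,h⟩|⟨h,-⟩)⟩
    · exact absurd h (by simp)
    · exact h
    · exact absurd h (by simp)
    · subst h; exact absurd rfl hne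
  · rintro rfl
    exact ⟨by simp, Or.inl (Or.inr ⟨trivial, rfl⟩)⟩

lemma addLeaf_adj_none' {x : Option V} : (addLeaf G s).Adj x none ↔ x = some s := by
  rw [(addLeaf G s).adj_comm, addLeaf_adj_none]

/-- If `P` is an open packing of `G`, its image is an open packing of `addLeaf G s`. -/
lemma image_packing {P : Set V} (hP : IsOpenPacking G P) :
    IsOpenPacking (addLeaf G s) (some '' P) := by
  rintro _ ⟨u, hu, rfl⟩ _ ⟨v, hv, rfl⟩ hne w ⟨h1, h2⟩
  have huv : u ≠ v := fun h => hne (by rw [h])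
  cases w with
  | none =>
      rw [addLeaf_adj_none'] at h1 h2
      exact huv (by rw [Option.some.inj h1, Option.some.inj h2])
  | some c =>
      rw [addLeaf_adj_some] at h1 h2
      exact hP hu hv huv c ⟨h1, h2⟩

/-- Case of a maximal packing of `addLeaf G s` not containing `none`. -/
lemma key_noneless (R : Set (Option V)) (hR : Maximal (IsOpenPacking (addLeaf G s)) R)
    (h0 : none ∉ R) : ∃ P, Maximal (IsOpenPacking G) P ∧ R.ncard = P.ncard := by
  refine ⟨some ⁻¹' R, ?_, ?_⟩
  · have himg : some '' (some ⁻¹' R : Set V) = R := by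
      ext x
      cases x with
      | none => simp [h0]
      | some v => simp
    constructor
    · intro u hu v hv huv w ⟨h1, h2⟩
      exact hR.1 hu hv (fun h => huv (Option.some.inj h)) (some w)
        ⟨addLeaf_adj_some.2 h1, addLeaf_adj_some.2 h2⟩
    · intro P₁ hP₁ hsub x hx
      have h1 : R ⊆ some '' P₁ := by
        rw [← himg]; exact Set.image_mono hsub
      have h2 : some '' P₁ ⊆ R := hR.2 (image_packing hP₁) h1
      exact h2 ⟨x, hx, rfl⟩
  · have himg : R = some '' (some ⁻¹' R : Set V) := by
      ext x
      cases x with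
      | none => simp [h0]
      | some v => simp
    nth_rewrite 1 [himg]
    rw [Set.ncard_image_of_injective _ (Option.some_injective V)]

/-- Twin property: `none` and the leaf `l` have the same neighbors in `addLeaf G s`. -/
lemma twin {l : V} (hl : G.neighborSet l = {s}) (w : Option V) :
    (addLeaf G s).Adj none w ↔ (addLeaf G s).Adj (some l) w := by
  have hlv : ∀ v, G.Adj l v ↔ v = s := by
    intro v
    rw [← SimpleGraph.mem_neighborSet, hl]; rfl
  have hls : l ≠ s := by
    intro h
    have h2 := (hlv s).2 rfl
    rw [h] at h2
    exact G.irrefl h2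
  cases w with
  | none =>
      constructor
      · intro h; exact absurd h ((addLeaf G s).loopless.irrefl none)
      · intro h
        rw [addLeaf_adj_none'] at h
        exact absurd (Option.some.inj h) hls
  | some v =>
      rw [addLeaf_adj_none, addLeaf_adj_some, hlv v, Option.some.injEq]
end

section
variable {V : Type*} [Fintype V] {G : SimpleGraph V} {s : V}

lemma swap_lemma {l : V} (hl : G.neighborSet l = {s}) {R : Set (Option V)}
    (hR : Maximal (IsOpenPacking (addLeaf G s)) R) (h0 : none ∈ R) :
    Maximal (IsOpenPacking (addLeaf G s)) (insert (some l) (R \ {none})) ∧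
      (none : Option V) ∉ insert (some l) (R \ {none}) ∧
      (insert (some l) (R \ {none})).ncard = R.ncard := by
  have adj_ns : (addLeaf G s).Adj none (some s) := addLeaf_adj_none.2 rfl
  have adj_ls : (addLeaf G s).Adj (some l) (some s) := (twin hl (some s)).1 adj_ns
  have hlR : some l ∉ R := by
    intro hlR
    exact hR.1 h0 hlR (by simp) (some s) ⟨adj_ns, adj_ls⟩
  have hpack : IsOpenPacking (addLeaf G s) (insert (some l) (R \ {none})) := by
    rintro u hu v hv huv w ⟨h1, h2⟩
    rcases hu with rfl | hu
    · rcases hv with rfl | hv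
      · exact huv rfl
      · exact hR.1 h0 hv.1 (Ne.symm hv.2) w ⟨(twin hl w).2 h1, h2⟩
    · rcases hv with rfl | hv
      · exact hR.1 h0 hu.1 (Ne.symm hu.2) w ⟨(twin hl w).2 h2, h1⟩
      · exact hR.1 hu.1 hv.1 huv w ⟨h1, h2⟩
  refine ⟨⟨hpack, ?_⟩, by simp, ?_⟩
  · intro S hS hsub x hx
    have hlS : some l ∈ S := hsub (Set.mem_insert _ _)
    cases x with
    | none =>
        exact absurd ⟨adj_ns, adj_ls⟩ (hS hx hlS (by simp) (some s))
    | some v =>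
        by_cases hvl : v = l
        · subst hvl; exact Set.mem_insert _ _
        · have hpack2 : IsOpenPacking (addLeaf G s) (insert (some v) R) := by
            rintro a ha b hb hab w ⟨h1, h2⟩
            have key : ∀ b', b' ∈ R → some v ≠ b' → ∀ w',
                ¬((addLeaf G s).Adj (some v) w' ∧ (addLeaf G s).Adj b' w') := by
              intro b' hb' hnb w' ⟨g1, g2⟩
              by_cases hbn : b' = none
              · subst hbn
                exact hS hx hlS (by simp [hvl]) w' ⟨g1, (twin hl w').1 g2⟩
              · exact hS hx (hsub (Set.mem_insert_of_mem _ ⟨hb', hbn⟩)) hnb w' ⟨g1, g2⟩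
            rcases ha with rfl | ha
            · rcases hb with rfl | hb
              · exact hab rfl
              · exact key b hb hab w ⟨h1, h2⟩
            · rcases hb with rfl | hb
              · exact key a ha (Ne.symm hab) w ⟨h2, h1⟩
              · exact hR.1 ha hb hab w ⟨h1, h2⟩
          have hsub2 : insert (some v) R ⊆ R := hR.2 hpack2 (Set.subset_insert _ _)
          exact Set.mem_insert_of_mem _ ⟨hsub2 (Set.mem_insert _ _), by simp⟩
  · have h1 : (insert (some l) (R \ {none})).ncard = (R \ {none}).ncard + 1 :=
      Set.ncard_insert_of_notMem (by simp [hlR]) (Set.toFinite _)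
    have h2 : (R \ {none}).ncard = R.ncard - 1 := Set.ncard_diff_singleton_of_mem h0
    have h3 : 0 < R.ncard := (Set.ncard_pos (Set.toFinite _)).2 ⟨none, h0⟩
    omega

end

theorem stmt9 {V : Type*} [Fintype V] (G : SimpleGraph V) (s : V)
    (hs : IsSupport G s) (hU : InU G) : InU (addLeaf G s) := by
  obtain ⟨l, hl⟩ := hs
  intro P' Q' hP' hQ'
  have key : ∀ R, Maximal (IsOpenPacking (addLeaf G s)) R →
      ∃ P, Maximal (IsOpenPacking G) P ∧ R.ncard = P.ncard := by
    intro R hR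
    by_cases h0 : none ∈ R
    · obtain ⟨hmax, hnn, hcard⟩ := swap_lemma hl hR h0
      obtain ⟨P, hP, hc⟩ := key_noneless _ hmax hnn
      exact ⟨P, hP, by rw [← hcard, hc]⟩
    · exact key_noneless R hR h0
  obtain ⟨P, hP, hPc⟩ := key P' hP'
  obtain ⟨Q, hQ, hQc⟩ := key Q' hQ'
  rw [hPc, hQc, hU P Q hP hQ]
end

section
/- Let G be a graph with a strong support vertex s (a vertex adjacent to at least two leaves) such that all maximal open packings of G have the same cardinality, and let w be a leaf adjacent to s. Then all maximal open packings of G − w have the same cardinality. -/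
open SimpleGraph

theorem stmt10 {V : Type*} [Fintype V] (G : SimpleGraph V) (s w : V)
    (hstrong : ∃ l₁ l₂, l₁ ≠ l₂ ∧ G.neighborSet l₁ = {s} ∧ G.neighborSet l₂ = {s})
    (hw : G.neighborSet w = {s}) (hU : InU G) :
    InU (G.induce {v | v ≠ w}) := by
  classical
  obtain ⟨l₁, l₂, hne12, h1, h2⟩ := hstrong
  have hadj_ws : G.Adj w s := by rw [← SimpleGraph.mem_neighborSet, hw]; rfl
  obtain ⟨l, hlw, hl⟩ : ∃ l, l ≠ w ∧ G.neighborSet l = {s} := by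
    by_cases h : l₁ = w
    · exact ⟨l₂, fun hh => hne12 (h.trans hh.symm), h2⟩
    · exact ⟨l₁, h, h1⟩
  have hadj_ls : G.Adj l s := by rw [← SimpleGraph.mem_neighborSet, hl]; rfl
  set S : Set V := {v | v ≠ w} with hS
  set G' := G.induce S with hG'
  -- if x is adjacent to w then x = s
  have hnw : ∀ x : V, G.Adj x w → x = s := by
    intro x hx
    have : x ∈ G.neighborSet w := G.adj_symm hx
    rwa [hw] at this
  -- leaf property: anything adjacent to l is s
  have hnl : ∀ x : V, G.Adj l x → x = s := by
    intro x hx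
    have : x ∈ G.neighborSet l := hx
    rwa [hl] at this
  -- Lemma A: packings lift
  have lemA : ∀ P : Set S, IsOpenPacking G' P → IsOpenPacking G (Subtype.val '' P) := by
    rintro P hP x ⟨u, hu, rfl⟩ y ⟨v, hv, rfl⟩ hxy z ⟨hzu, hzv⟩
    have huv : u ≠ v := fun h => hxy (congrArg Subtype.val h)
    by_cases hzw : z = w
    · subst hzw
      exact hxy ((hnw _ hzu).trans (hnw _ hzv).symm)
    · exact hP hu hv huv ⟨z, hzw⟩ ⟨hzu, hzv⟩
  -- Lemma B: a maximal packing of G' contains a neighbor of s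
  have lemB : ∀ P : Set S, Maximal (IsOpenPacking G') P → ∃ u ∈ P, G.Adj (↑u) s := by
    intro P hP
    by_contra hcon
    push_neg at hcon
    have hlS : l ∈ S := hlw
    set l' : S := ⟨l, hlS⟩ with hl'
    have hpack : IsOpenPacking G' (insert l' P) := by
      rintro u hu v hv huv z ⟨hzu, hzv⟩
      rcases Set.mem_insert_iff.1 hu with hu' | hu' <;>
        rcases Set.mem_insert_iff.1 hv with hv' | hv'
      · exact huv (hu'.trans hv'.symm)
      · subst hu'
        have hz : (↑z : V) = s := hnl _ hzu
        have hvz : G.Adj (↑v) (↑z) := hzv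
        exact hcon v hv' (hz ▸ hvz)
      · subst hv'
        have hz : (↑z : V) = s := hnl _ hzv
        have huz : G.Adj (↑u) (↑z) := hzu
        exact hcon u hu' (hz ▸ huz)
      · exact hP.1 hu' hv' huv z ⟨hzu, hzv⟩
    have hsub : insert l' P ≤ P := hP.2 hpack (Set.subset_insert _ _)
    exact hcon l' (hsub (Set.mem_insert _ _)) hadj_ls
  -- Lemma C: maximal packings lift to maximal packings
  have lemC : ∀ P : Set S, Maximal (IsOpenPacking G') P →
      Maximal (IsOpenPacking G) (Subtype.val '' P) := by
    intro P hP
    refine ⟨lemA P hP.1, fun Q hQ hle x hx => ?_⟩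
    by_cases hxw : x = w
    · subst hxw
      obtain ⟨u, hu, hus⟩ := lemB P hP
      exfalso
      exact hQ (hle ⟨u, hu, rfl⟩) hx u.2 s ⟨hus, hadj_ws⟩
    · set Q' : Set S := {v : S | (↑v : V) ∈ Q} with hQ'
      have hQ'pack : IsOpenPacking G' Q' := by
        rintro u hu v hv huv z ⟨hzu, hzv⟩
        exact hQ hu hv (fun h => huv (Subtype.ext h)) ↑z ⟨hzu, hzv⟩
      have hPQ' : P ≤ Q' := fun v hv => hle ⟨v, hv, rfl⟩
      have : Q' ≤ P := hP.2 hQ'pack hPQ'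
      exact ⟨⟨x, hxw⟩, this hx, rfl⟩
  intro P Q hP hQ
  have := hU _ _ (lemC P hP) (lemC Q hQ)
  rwa [Set.ncard_image_of_injective _ Subtype.val_injective,
    Set.ncard_image_of_injective _ Subtype.val_injective] at this
end

section
/- Let G be a triangle-free graph in which all maximal open packings have the same cardinality. Then no vertex of G is adjacent to two or more support vertices. -/
open SimpleGraph

theorem stmt11 {V : Type*} [Fintype V] (G : SimpleGraph V)
    (htf : G.CliqueFree 3) (hU : InU G) :
    ∀ v s₁ s₂, G.Adj v s₁ → G.Adj v s₂ → IsSupport G s₁ → IsSupport G s₂ → s₁ = s₂ := by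
  rintro v s₁ s₂ hvs₁ hvs₂ ⟨l₁, hl₁⟩ ⟨l₂, hl₂⟩
  by_contra hne
  -- basic adjacencies
  have hl₁s₁ : G.Adj l₁ s₁ := by
    have : s₁ ∈ G.neighborSet l₁ := by rw [hl₁]; rfl
    exact this
  have hl₂s₂ : G.Adj l₂ s₂ := by
    have : s₂ ∈ G.neighborSet l₂ := by rw [hl₂]; rfl
    exact this
  have hnl₁ : ∀ w, G.Adj l₁ w → w = s₁ := fun w hw => by
    have : w ∈ G.neighborSet l₁ := hw
    rwa [hl₁] at this
  have hnl₂ : ∀ w, G.Adj l₂ w → w = s₂ := fun w hw => by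
    have : w ∈ G.neighborSet l₂ := hw
    rwa [hl₂] at this
  have hl₁l₂ : l₁ ≠ l₂ := by
    rintro rfl; exact hne ((hnl₁ s₂ hl₂s₂).symm)
  have hvl₁ : v ≠ l₁ := by
    rintro rfl; exact hne (hnl₁ s₂ hvs₂).symm
  have hvl₂ : v ≠ l₂ := by
    rintro rfl; exact hne (hnl₂ s₁ hvs₁)
  -- extend {v} to a maximal open packing P
  have hv : IsOpenPacking G {v} := by
    rintro u hu w hw huw
    simp only [Set.mem_singleton_iff] at hu hw
    exact absurd (hu.trans hw.symm) huw
  obtain ⟨P, hvP, hP⟩ := Finite.exists_le_maximal hv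
  have hvmem : v ∈ P := hvP rfl
  -- l₁, l₂ ∉ P
  have hl₁P : l₁ ∉ P := fun h =>
    hP.prop h hvmem hvl₁.symm s₁ ⟨hl₁s₁, hvs₁⟩
  have hl₂P : l₂ ∉ P := fun h =>
    hP.prop h hvmem hvl₂.symm s₂ ⟨hl₂s₂, hvs₂⟩
  -- the swapped set
  set Q₀ : Set V := (P \ {v}) ∪ {l₁, l₂} with hQ₀def
  -- compatibility of l₁ and l₂ with P \ {v}
  have key : ∀ p ∈ P \ {v}, ∀ (l s : V), (∀ w, G.Adj l w → w = s) → G.Adj v s →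
      ∀ w, ¬(G.Adj l w ∧ G.Adj p w) := by
    rintro p ⟨hpP, hpv⟩ l s hl hv' w ⟨hlw, hpw⟩
    have : w = s := hl w hlw
    subst this
    exact hP.prop hpP hvmem hpv w ⟨hpw, hv'⟩
  have hQ₀ : IsOpenPacking G Q₀ := by
    rintro u hu w hw huw x ⟨hux, hwx⟩
    rcases hu with hu | hu <;> rcases hw with hw | hw
    · exact hP.prop hu.1 hw.1 huw x ⟨hux, hwx⟩
    · rcases hw with rfl | rfl
      · exact key u hu _ s₁ hnl₁ hvs₁ x ⟨hwx, hux⟩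
      · exact key u hu _ s₂ hnl₂ hvs₂ x ⟨hwx, hux⟩
    · rcases hu with rfl | rfl
      · exact key w hw _ s₁ hnl₁ hvs₁ x ⟨hux, hwx⟩
      · exact key w hw _ s₂ hnl₂ hvs₂ x ⟨hux, hwx⟩
    · rcases hu with rfl | rfl <;> rcases hw with rfl | rfl
      · exact huw rfl
      · exact hne ((hnl₁ x hux).symm.trans (hnl₂ x hwx))
      · exact hne ((hnl₁ x hwx).symm.trans (hnl₂ x hux))
      · exact huw rfl
  obtain ⟨Q, hQ₀Q, hQ⟩ := Finite.exists_le_maximal hQ₀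
  -- cardinality computation
  have hPfin : P.Finite := Set.toFinite P
  have hfin : Q₀.Finite := Set.toFinite Q₀
  have hl₁Q₀ : l₁ ∉ P \ {v} := fun h => hl₁P h.1
  have hl₂Q₀ : l₂ ∉ P \ {v} := fun h => hl₂P h.1
  have hcard : Q₀.ncard = P.ncard + 1 := by
    have hdisj : Disjoint (P \ {v}) {l₁, l₂} := by
      rw [Set.disjoint_right]
      rintro a (rfl | rfl) <;> simp_all
    rw [hQ₀def, Set.ncard_union_eq hdisj (Set.toFinite _) (Set.toFinite _),
      Set.ncard_diff_singleton_of_mem hvmem,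
      Set.ncard_pair hl₁l₂]
    have : 1 ≤ P.ncard := Set.ncard_pos (Set.toFinite _) |>.mpr ⟨v, hvmem⟩
    omega
  have hle : Q₀.ncard ≤ Q.ncard := Set.ncard_le_ncard hQ₀Q (Set.toFinite _)
  have := hU P Q hP hQ
  omega
end

section
/- If G is a graph with girth at least 15 and minimum degree at least 2, then G has two maximal open packings of different cardinalities. -/
open SimpleGraph

lemma aux_no_two_paths {V : Type*} {G : SimpleGraph V} (hg : 15 ≤ G.egirth) {a b : V}
    (p q : G.Walk a b) (hp : p.IsPath) (hq : q.IsPath) (hne : p ≠ q)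
    (hlen : p.length + q.length ≤ 14) : False := by
  classical
  set s : Set (Sym2 V) := {e | e ∈ p.edges ∨ e ∈ q.edges} with hs
  set G' := SimpleGraph.fromEdgeSet s with hG'
  have hle : G' ≤ G := by
    rw [hG', hs]
    intro u v huv
    rcases huv with ⟨h1 | h1, -⟩
    · exact (Walk.adj_of_mem_edges p h1)
    · exact (Walk.adj_of_mem_edges q h1)
  have hles : G'.edgeSet ⊆ G.edgeSet := edgeSet_mono hle
  have hmem : ∀ (r : G.Walk a b), (∀ e ∈ r.edges, e ∈ s) → ∀ e ∈ r.edges, e ∈ G'.edgeSet := by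
    intro r hr e he
    rw [hG', edgeSet_fromEdgeSet]
    exact ⟨hr e he, G.not_isDiag_of_mem_edgeSet (r.edges_subset_edgeSet he)⟩
  have hmp : ∀ e ∈ p.edges, e ∈ G'.edgeSet := hmem p (fun e he => Or.inl he)
  have hmq : ∀ e ∈ q.edges, e ∈ G'.edgeSet := hmem q (fun e he => Or.inr he)
  set p' := p.transfer G' hmp with hp'def
  set q' := q.transfer G' hmq with hq'def
  have hp' : p'.IsPath := hp.transfer _
  have hq' : q'.IsPath := hq.transfer _
  set F : G'.Walk a b → G.Walk a b :=
    fun w => w.transfer G (fun e he => hles (w.edges_subset_edgeSet he)) with hF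
  have hFp : F p' = p := by
    rw [hF]; simp only [hp'def]
    rw [Walk.transfer_transfer, Walk.transfer_self]
  have hFq : F q' = q := by
    rw [hF]; simp only [hq'def]
    rw [Walk.transfer_transfer, Walk.transfer_self]
  have hne' : p' ≠ q' := by
    intro h
    exact hne (by rw [← hFp, ← hFq, h])
  have hnac : ¬ G'.IsAcyclic := by
    intro hac
    exact hne' (congrArg Subtype.val (hac.path_unique ⟨p', hp'⟩ ⟨q', hq'⟩))
  obtain ⟨v, c, hc⟩ : ∃ (v : V) (c : G'.Walk v v), c.IsCycle := by
    by_contra h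
    push_neg at h
    exact hnac (fun v c hc => h v c hc)
  have hce : ∀ e ∈ c.edges, e ∈ G.edgeSet := fun e he => hles (c.edges_subset_edgeSet he)
  have hcyc : (c.transfer G hce).IsCycle := hc.transfer _
  have h15 : (15 : ℕ∞) ≤ (c.transfer G hce).length := le_egirth.mp hg _ _ hcyc
  rw [Walk.length_transfer] at h15
  have hnodup : c.edges.Nodup := hc.edges_nodup
  have hsubl : c.edges ⊆ (p.edges ++ q.edges) := by
    intro e he
    have := c.edges_subset_edgeSet he
    rw [hG', edgeSet_fromEdgeSet] at this
    rcases this.1 with h1 | h1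
    · exact List.mem_append_left _ h1
    · exact List.mem_append_right _ h1
  have hclen : c.length ≤ 14 := by
    have h1 : c.edges.length = c.edges.toFinset.card := (List.toFinset_card_of_nodup hnodup).symm
    have h2 : c.edges.toFinset ⊆ (p.edges ++ q.edges).toFinset := by
      intro e he
      rw [List.mem_toFinset] at he ⊢
      exact hsubl he
    have h3 := Finset.card_le_card h2
    have h4 := (p.edges ++ q.edges).toFinset_card_le
    have h5 : (p.edges ++ q.edges).length = p.length + q.length := by
      rw [List.length_append, Walk.length_edges, Walk.length_edges]
    have := c.length_edges
    omega
  have : (15:ℕ∞) ≤ (14:ℕ∞) := le_trans h15 (by exact_mod_cast hclen)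
  norm_num at this

section Aux
variable {V : Type*} {G : SimpleGraph V}

lemma aux_support_dist_le {a b x : V} (p : G.Walk a b) (hx : x ∈ p.support) :
    G.dist x b ≤ p.length := by
  classical
  exact le_trans (dist_le (p.dropUntil x hx)) (p.length_dropUntil_le hx)

lemma aux_tri (hg : 15 ≤ G.egirth) {u v w : V} (h1 : G.Adj u v) (h2 : G.Adj v w)
    (h3 : G.Adj u w) : False := by
  refine aux_no_two_paths hg (Walk.cons h1 (Walk.cons h2 Walk.nil)) (Walk.cons h3 Walk.nil)
    ?_ ?_ ?_ (by simp)
  · simp [Walk.cons_isPath_iff, h1.ne, h2.ne, h3.ne]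
  · simp [Walk.cons_isPath_iff, h3.ne]
  · intro h
    have := congrArg Walk.length h
    simp at this

lemma aux_sqr (hg : 15 ≤ G.egirth) {u v1 v2 w : V} (h1 : G.Adj u v1) (h2 : G.Adj v1 w)
    (h3 : G.Adj u v2) (h4 : G.Adj v2 w) (hv : v1 ≠ v2) (huw : u ≠ w) : False := by
  refine aux_no_two_paths hg (Walk.cons h1 (Walk.cons h2 Walk.nil))
    (Walk.cons h3 (Walk.cons h4 Walk.nil)) ?_ ?_ ?_ (by simp)
  · simp [Walk.cons_isPath_iff, h1.ne, h2.ne, huw]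
  · simp [Walk.cons_isPath_iff, h3.ne, h4.ne, huw]
  · intro h
    have := congrArg Walk.support h
    simp [Walk.support_cons] at this
    exact hv this

end Aux

section Aux2
variable {V : Type*} {G : SimpleGraph V}

lemma aux_support_lt {u z v : V} (p : G.Walk u z) (hv : v ∈ p.support) (hne : v ≠ u) :
    G.dist v z + 1 ≤ p.length := by
  classical
  set t := p.takeUntil v hv with ht
  set d := p.dropUntil v hv with hd
  have hsp := p.take_spec hv
  have hlen : t.length + d.length = p.length := by
    rw [← Walk.length_append, ← ht, ← hd] at *
    rw [hsp]
  have h1 : G.dist v z ≤ d.length := dist_le d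
  have h2 : 1 ≤ t.length := by
    by_contra h
    push_neg at h
    exact hne (Walk.eq_of_length_eq_zero (p := t) (by omega)).symm
  omega

lemma aux_dist_succ {z w y : V} (h : G.Adj w y) (hr : G.Reachable z w) :
    G.dist z y ≤ G.dist z w + 1 := by
  obtain ⟨p, -, hl⟩ := hr.exists_path_of_dist
  have := dist_le (p.concat h)
  rwa [Walk.length_concat, hl] at this

lemma aux_lateral (hg : 15 ≤ G.egirth) {z u v : V} (h : G.Adj u v)
    (hd : G.dist z u = G.dist z v) (h0 : G.dist z u ≠ 0) (h6 : G.dist z u ≤ 6) : False := by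
  have hru : G.Reachable z u := Reachable.of_dist_ne_zero h0
  have hrv : G.Reachable z v := Reachable.of_dist_ne_zero (by omega : G.dist z v ≠ 0)
  obtain ⟨pu, hpu, hlu⟩ := hru.symm.exists_path_of_dist
  obtain ⟨pv, hpv, hlv⟩ := hrv.symm.exists_path_of_dist
  have hcu : G.dist u z = G.dist z u := dist_comm ..
  have hcv : G.dist v z = G.dist z v := dist_comm ..
  refine aux_no_two_paths hg pu (Walk.cons h pv) hpu ?_ ?_ ?_
  · rw [Walk.cons_isPath_iff]
    refine ⟨hpv, fun hu => ?_⟩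
    have := aux_support_lt pv hu h.ne
    omega
  · intro hEq
    have := congrArg Walk.length hEq
    rw [Walk.length_cons] at this
    omega
  · rw [Walk.length_cons]; omega

lemma aux_parent_unique (hg : 15 ≤ G.egirth) {z u w1 w2 : V} (h1 : G.Adj w1 u)
    (h2 : G.Adj w2 u) (hd1 : G.dist z w1 + 1 = G.dist z u)
    (hd2 : G.dist z w2 + 1 = G.dist z u) (h7 : G.dist z u ≤ 7) : w1 = w2 := by
  by_contra hne
  have hru : G.Reachable z u := Reachable.of_dist_ne_zero (by omega)
  have hrw1 : G.Reachable w1 z := (hru.trans h1.reachable.symm).symm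
  have hrw2 : G.Reachable w2 z := (hru.trans h2.reachable.symm).symm
  obtain ⟨p1, hp1, hl1⟩ := hrw1.exists_path_of_dist
  obtain ⟨p2, hp2, hl2⟩ := hrw2.exists_path_of_dist
  have hc1 : G.dist w1 z = G.dist z w1 := dist_comm ..
  have hc2 : G.dist w2 z = G.dist z w2 := dist_comm ..
  have hcu : G.dist u z = G.dist z u := dist_comm ..
  refine aux_no_two_paths hg (Walk.cons h1.symm p1) (Walk.cons h2.symm p2) ?_ ?_ ?_ ?_
  · rw [Walk.cons_isPath_iff]
    refine ⟨hp1, fun hu => ?_⟩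
    have := aux_support_lt p1 hu h1.ne'
    omega
  · rw [Walk.cons_isPath_iff]
    refine ⟨hp2, fun hu => ?_⟩
    have := aux_support_lt p2 hu h2.ne'
    omega
  · intro hEq
    have hs := congrArg Walk.support hEq
    rw [Walk.support_cons, Walk.support_cons, p1.support_eq_cons, p2.support_eq_cons] at hs
    simp at hs
    have hh := congrArg List.head? hs
    rw [p1.support_eq_cons, p2.support_eq_cons, List.head?_cons, List.head?_cons] at hh
    exact hne (Option.some_injective _ hh)
  · rw [Walk.length_cons, Walk.length_cons]
    omega

lemma aux_parent_exists {z u : V} (h0 : G.dist z u ≠ 0) :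
    ∃ w, G.Adj w u ∧ G.dist z w + 1 = G.dist z u := by
  have hru : G.Reachable z u := Reachable.of_dist_ne_zero h0
  obtain ⟨p, hp, hl⟩ := hru.symm.exists_path_of_dist
  have hcu : G.dist u z = G.dist z u := dist_comm ..
  cases p with
  | nil => rw [Walk.length_nil] at hl; omega
  | @cons _ w _ h q =>
    refine ⟨w, h.symm, ?_⟩
    have hq : G.dist z w ≤ q.length := by
      have := dist_le q
      have : G.dist w z = G.dist z w := dist_comm ..
      omega
    have h2 : G.dist z u ≤ G.dist z w + 1 := by
      have hrw : G.Reachable z w := (q.reverse.reachable)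
      have := aux_dist_succ h.symm hrw
      exact le_trans (by omega) (le_refl _)
    rw [Walk.length_cons] at hl
    omega

lemma aux_adj_dist (hg : 15 ≤ G.egirth) {z u w : V} (h : G.Adj u w) (h0 : G.dist z u ≠ 0)
    (h6 : G.dist z u ≤ 6) :
    G.dist z w + 1 = G.dist z u ∨ G.dist z w = G.dist z u + 1 := by
  have hru : G.Reachable z u := Reachable.of_dist_ne_zero h0
  have hrw : G.Reachable z w := hru.trans h.reachable
  have b1 : G.dist z w ≤ G.dist z u + 1 := aux_dist_succ h hru
  have b2 : G.dist z u ≤ G.dist z w + 1 := aux_dist_succ h.symm hrw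
  have hne : G.dist z w ≠ G.dist z u := by
    intro heq
    exact aux_lateral hg h heq.symm h0 h6
  omega

lemma aux_dist2 {z u : V} (h : G.dist z u = 2) : ∃ m, G.Adj z m ∧ G.Adj m u := by
  have hru : G.Reachable z u := Reachable.of_dist_ne_zero (by omega)
  obtain ⟨p, hp, hl⟩ := hru.exists_path_of_dist
  rw [h] at hl
  cases p with
  | nil => simp at hl
  | @cons _ m _ hzm q =>
    cases q with
    | nil => simp at hl
    | @cons _ m' _ hmn r =>
      have hr0 : r.length = 0 := by
        rw [Walk.length_cons, Walk.length_cons] at hl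
        omega
      have he := Walk.eq_of_length_eq_zero hr0
      exact ⟨m, hzm, he ▸ hmn⟩

end Aux2


theorem stmt12 {V : Type*} [Fintype V] [Nonempty V] (G : SimpleGraph V)
    [DecidableRel G.Adj] (hg : 15 ≤ G.egirth) (hδ : ∀ v, 2 ≤ G.degree v) :
    ∃ P Q, Maximal (IsOpenPacking G) P ∧ Maximal (IsOpenPacking G) Q ∧
      P.ncard ≠ Q.ncard := by
  classical
  set z := Classical.arbitrary V with hzdef
  -- every vertex has a neighbor different from any given neighbor
  have hnb : ∀ u w : V, G.Adj u w → ∃ x, G.Adj u x ∧ x ≠ w := by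
    intro u w h
    by_contra hc
    push_neg at hc
    have hsub : G.neighborFinset u ⊆ {w} := by
      intro x hx
      rw [mem_neighborFinset] at hx
      simp [hc x hx]
    have hcc := Finset.card_le_card hsub
    rw [Finset.card_singleton] at hcc
    have hd := hδ u
    rw [← card_neighborFinset_eq_degree] at hd
    omega
  have ha0 : ∃ a, G.Adj z a := by
    have hd := hδ z
    rw [← card_neighborFinset_eq_degree] at hd
    have : (G.neighborFinset z).Nonempty := Finset.card_pos.mp (by omega)
    obtain ⟨a, ha⟩ := this
    exact ⟨a, (mem_neighborFinset ..).mp ha⟩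
  have hxex : ∀ a : V, ∃ x, G.Adj z a → (G.Adj a x ∧ x ≠ z) := by
    intro a
    by_cases h : G.Adj z a
    · obtain ⟨x, hx1, hx2⟩ := hnb a z h.symm
      exact ⟨x, fun _ => ⟨hx1, hx2⟩⟩
    · exact ⟨z, fun h' => absurd h' h⟩
  choose xf hxf using hxex
  have hda : ∀ a, G.Adj z a → G.dist z a = 1 := fun a h => dist_eq_one_iff_adj.mpr h
  have hdx : ∀ a, G.Adj z a → G.dist z (xf a) = 2 := by
    intro a ha
    obtain ⟨hax, hxz⟩ := hxf a ha
    have h1 : G.dist z (xf a) ≤ 2 := by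
      have := aux_dist_succ hax ha.reachable
      have := hda a ha
      omega
    have hr : G.Reachable z (xf a) := ha.reachable.trans hax.reachable
    have h0 : 0 < G.dist z (xf a) := hr.pos_dist_of_ne (Ne.symm hxz)
    have h2 : G.dist z (xf a) ≠ 1 := by
      intro h
      exact aux_tri hg ha hax (dist_eq_one_iff_adj.mp h)
    omega
  -- the two regions
  set Rg1 : Set V := {u : V | ∃ a, G.Adj z a ∧ (u = xf a ∨ ∃ w, G.Adj (xf a) w ∧ G.Adj u w)}
    with hRg1def
  set Rg2 : Set V := {u : V | u = z ∨ ∃ w, G.Adj z w ∧ G.Adj u w} with hRg2def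
  have hS1Rg1 : ∀ a, G.Adj z a → xf a ∈ Rg1 := fun a h => ⟨a, h, Or.inl rfl⟩
  have hS1Rg2 : ∀ a, G.Adj z a → xf a ∈ Rg2 := fun a h => Or.inr ⟨a, h, (hxf a h).1.symm⟩
  have hzRg2 : z ∈ Rg2 := Or.inl rfl
  have hRg21 : Rg2 ⊆ Rg1 := by
    rintro u (rfl | ⟨b, hzb, hub⟩)
    · obtain ⟨a0, ha0'⟩ := ha0
      exact ⟨a0, ha0', Or.inr ⟨a0, (hxf a0 ha0').1.symm, ha0'⟩⟩
    · exact ⟨b, hzb, Or.inr ⟨b, (hxf b hzb).1.symm, hub⟩⟩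
  have hzRg1 : z ∈ Rg1 := hRg21 hzRg2
  -- structure of the annulus Rg1 \ Rg2
  have hD : ∀ u : V, ∃ n y : V, u ∈ Rg1 \ Rg2 →
      (G.Adj u n ∧ G.Adj y n ∧ y ∉ Rg1 ∧ G.dist z u = 4 ∧ G.dist z n = 5 ∧ G.dist z y = 6) := by
    intro u
    by_cases hu : u ∈ Rg1 \ Rg2
    swap
    · exact ⟨z, z, fun h => absurd h hu⟩
    obtain ⟨⟨a, hza, hcase⟩, hu2⟩ := hu
    have hucom : ∀ w, G.Adj z w → ¬ G.Adj u w := fun w h1 h2 => hu2 (Or.inr ⟨w, h1, h2⟩)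
    rcases hcase with rfl | ⟨n0, hxn, hun⟩
    · exact absurd (hS1Rg2 a hza) hu2
    have hdxa := hdx a hza
    have hdn0 : G.dist z n0 = 3 := by
      rcases aux_adj_dist (z := z) hg hxn (by omega) (by omega) with h | h
      · exfalso
        exact hucom n0 (dist_eq_one_iff_adj.mp (by omega)) hun
      · omega
    have hdu : G.dist z u = 4 := by
      rcases aux_adj_dist (z := z) hg hun.symm (by omega) (by omega) with h | h
      · exfalso
        obtain ⟨m, hm1, hm2⟩ := aux_dist2 (show G.dist z u = 2 by omega)
        exact hucom m hm1 hm2.symm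
      · omega
    obtain ⟨n, hun', hne_n⟩ := hnb u n0 hun
    have hdn : G.dist z n = 5 := by
      rcases aux_adj_dist (z := z) hg hun' (by omega) (by omega) with h | h
      · exact absurd (aux_parent_unique (z := z) hg hun'.symm hun.symm (by omega) (by omega) (by omega))
          hne_n
      · omega
    obtain ⟨y, hny, hne_y⟩ := hnb n u hun'.symm
    have hdy : G.dist z y = 6 := by
      rcases aux_adj_dist (z := z) hg hny (by omega) (by omega) with h | h
      · exact absurd (aux_parent_unique (z := z) hg hny.symm hun' (by omega) (by omega) (by omega)) hne_y
      · omega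
    have hyR : y ∉ Rg1 := by
      rintro ⟨b, hzb, hby⟩
      rcases hby with rfl | ⟨w, hxbw, hyw⟩
      · have := hdx b hzb
        omega
      · have hrb : G.Reachable z (xf b) := hzb.reachable.trans (hxf b hzb).1.reachable
        have hw3 : G.dist z w ≤ 3 := by
          have := aux_dist_succ hxbw hrb
          have := hdx b hzb
          omega
        have hy4 : G.dist z y ≤ G.dist z w + 1 :=
          aux_dist_succ hyw.symm (hrb.trans hxbw.reachable)
        omega
    exact ⟨n, y, fun _ => ⟨hun', hny.symm, hyR, hdu, hdn, hdy⟩⟩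
  choose nf yf hf using hD
  set Y : Set V := yf '' (Rg1 \ Rg2) with hYdef
  -- Y is an open packing avoiding Rg1
  have hYR : ∀ v ∈ Y, v ∉ Rg1 := by
    rintro v ⟨u, hu, rfl⟩
    exact (hf u hu).2.2.1
  have hYpack : IsOpenPacking G Y := by
    rintro u1 hu1 u2 hu2 hne w ⟨hw1, hw2⟩
    obtain ⟨v1, hv1, rfl⟩ := hu1
    obtain ⟨v2, hv2, rfl⟩ := hu2
    obtain ⟨g1a, g1b, g1R, g1du, g1dn, g1dy⟩ := hf v1 hv1
    obtain ⟨g2a, g2b, g2R, g2du, g2dn, g2dy⟩ := hf v2 hv2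
    rcases aux_adj_dist (z := z) hg hw1 (by omega) (by omega) with h | h
    · have e1 : w = nf v1 :=
        aux_parent_unique (z := z) hg hw1.symm g1b.symm (by omega) (by omega) (by omega)
      have e2 : w = nf v2 :=
        aux_parent_unique (z := z) hg hw2.symm g2b.symm (by omega) (by omega) (by omega)
      have : v1 = v2 := by
        refine aux_parent_unique (z := z) hg (e1.symm ▸ g1a) (e2.symm ▸ g2a) ?_ ?_ (by omega)
        · omega
        · omega
      exact hne (this ▸ rfl)
    · exact hne (aux_parent_unique (z := z) hg hw1 hw2 (by omega) (by omega) (by omega))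
  -- take a maximal open packing containing Y inside the complement of Rg1
  set C : Set (Set V) := {P | Y ⊆ P ∧ (∀ v ∈ P, v ∉ Rg1) ∧ IsOpenPacking G P} with hCdef
  have hYC : Y ∈ C := ⟨subset_rfl, hYR, hYpack⟩
  obtain ⟨T, hTC, hTmax⟩ : ∃ T ∈ C, ∀ P ∈ C, id T ≤ id P → id T = id P := by
    obtain ⟨T, hTC, hTm⟩ := Set.Finite.exists_maximalFor id C (Set.toFinite C) ⟨Y, hYC⟩
    exact ⟨T, hTC, fun P hP hle => le_antisymm hle (hTm hP hle)⟩
  obtain ⟨hYT, hTR, hTpack⟩ := hTC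
  -- domination property of T outside Rg1
  have hTdom : ∀ u, u ∉ Rg1 → u ∉ T →
      ∃ t ∈ T, t ≠ u ∧ ∃ w, G.Adj t w ∧ G.Adj u w := by
    intro u hu1 hu2
    by_contra hno
    push_neg at hno
    have hins : IsOpenPacking G (insert u T) := by
      rintro v1 hv1 v2 hv2 hvne w ⟨hw1, hw2⟩
      rcases Set.mem_insert_iff.mp hv1 with rfl | hv1'
      · rcases Set.mem_insert_iff.mp hv2 with rfl | hv2'
        · exact hvne rfl
        · exact hno v2 hv2' (fun h => hvne h.symm) w hw2 hw1
      · rcases Set.mem_insert_iff.mp hv2 with rfl | hv2'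
        · exact hno v1 hv1' hvne w hw1 hw2
        · exact hTpack hv1' hv2' hvne w ⟨hw1, hw2⟩
    have hmem : insert u T ∈ C := by
      refine ⟨hYT.trans (Set.subset_insert ..), ?_, hins⟩
      rintro v hv
      rcases Set.mem_insert_iff.mp hv with rfl | hv'
      · exact hu1
      · exact hTR v hv'
    have hTeq := hTmax _ hmem (Set.subset_insert ..)
    simp only [id_eq] at hTeq
    exact hu2 (hTeq.symm ▸ Set.mem_insert u T)
  -- the two maximal open packings
  set N : Set V := G.neighborSet z with hNdef
  set S1 : Set V := xf '' N with hS1def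
  have hmemN : ∀ a, a ∈ N ↔ G.Adj z a := fun a => Iff.rfl
  set M1 : Set V := S1 ∪ T with hM1def
  set M2 : Set V := insert z T with hM2def
  have hS1sub : ∀ a, G.Adj z a → xf a ∈ S1 := fun a h => ⟨a, h, rfl⟩
  -- M1 is an open packing
  have hM1pack : IsOpenPacking G M1 := by
    rintro u hu v hv hne w ⟨hw1, hw2⟩
    rcases hu with ⟨a, ha, rfl⟩ | hu
    · rcases hv with ⟨b, hb, rfl⟩ | hv
      · have hda2 := hdx a ha
        have hdb2 := hdx b hb
        rcases aux_adj_dist (z := z) hg hw1 (by omega) (by omega) with h | h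
        · have e1 : w = a := by
            refine aux_parent_unique (z := z) hg hw1.symm (hxf a ha).1 (by omega) ?_ (by omega)
            have := hda a ha
            omega
          have e2 : w = b := by
            refine aux_parent_unique (z := z) hg hw2.symm (hxf b hb).1 (by omega) ?_ (by omega)
            have := hda b hb
            omega
          exact hne (by rw [← e1, e2])
        · exact hne (aux_parent_unique (z := z) hg hw1 hw2 (by omega) (by omega) (by omega))
      · exact hTR v hv ⟨a, ha, Or.inr ⟨w, hw1, hw2⟩⟩
    · rcases hv with ⟨b, hb, rfl⟩ | hv
      · exact hTR u hu ⟨b, hb, Or.inr ⟨w, hw2, hw1⟩⟩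
      · exact hTpack hu hv hne w ⟨hw1, hw2⟩
  -- M2 is an open packing
  have hM2pack : IsOpenPacking G M2 := by
    rintro u hu v hv hne w ⟨hw1, hw2⟩
    rcases Set.mem_insert_iff.mp hu with rfl | hu'
    · rcases Set.mem_insert_iff.mp hv with rfl | hv'
      · exact hne rfl
      · exact hTR v hv' (hRg21 (Or.inr ⟨w, hw1, hw2⟩))
    · rcases Set.mem_insert_iff.mp hv with rfl | hv'
      · exact hTR u hu' (hRg21 (Or.inr ⟨w, hw2, hw1⟩))
      · exact hTpack hu' hv' hne w ⟨hw1, hw2⟩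
  -- domination for M1
  have hM1dom : ∀ u, u ∉ M1 → ∃ t ∈ M1, t ≠ u ∧ ∃ w, G.Adj t w ∧ G.Adj u w := by
    intro u hu
    by_cases hR : u ∈ Rg1
    · obtain ⟨a, ha, hc⟩ := hR
      rcases hc with rfl | ⟨w, h1, h2⟩
      · exact absurd (Set.mem_union_left T (hS1sub a ha)) hu
      · refine ⟨xf a, Set.mem_union_left T (hS1sub a ha), ?_, w, h1, h2⟩
        intro h
        exact hu (h ▸ Set.mem_union_left T (hS1sub a ha))
    · have huT : u ∉ T := fun h => hu (Set.mem_union_right S1 h)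
      obtain ⟨t, ht, htne, w, hw1, hw2⟩ := hTdom u hR huT
      exact ⟨t, Set.mem_union_right S1 ht, htne, w, hw1, hw2⟩
  -- domination for M2
  have hM2dom : ∀ u, u ∉ M2 → ∃ t ∈ M2, t ≠ u ∧ ∃ w, G.Adj t w ∧ G.Adj u w := by
    intro u hu
    have hune : u ≠ z := fun h => hu (h ▸ Set.mem_insert z T)
    by_cases hR2 : u ∈ Rg2
    · rcases hR2 with rfl | ⟨w, h1, h2⟩
      · exact absurd (Set.mem_insert z T) hu
      · exact ⟨z, Set.mem_insert z T, Ne.symm hune, w, h1, h2⟩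
    · by_cases hR1 : u ∈ Rg1
      · obtain ⟨g1a, g1b, g1R, g1du, g1dn, g1dy⟩ := hf u ⟨hR1, hR2⟩
        refine ⟨yf u, Set.mem_insert_of_mem z (hYT ⟨u, ⟨hR1, hR2⟩, rfl⟩), ?_, nf u, g1b, g1a⟩
        intro h
        rw [h] at g1dy
        omega
      · have huT : u ∉ T := fun h => hu (Set.mem_insert_of_mem z h)
        obtain ⟨t, ht, htne, w, hw1, hw2⟩ := hTdom u hR1 huT
        exact ⟨t, Set.mem_insert_of_mem z ht, htne, w, hw1, hw2⟩
  -- maximality from domination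
  have hMaxOf : ∀ M : Set V, IsOpenPacking G M →
      (∀ u, u ∉ M → ∃ t ∈ M, t ≠ u ∧ ∃ w, G.Adj t w ∧ G.Adj u w) →
      Maximal (IsOpenPacking G) M := by
    intro M hp hdom
    refine ⟨hp, fun Q hQ hMQ => ?_⟩
    intro q hq
    by_contra hqM
    obtain ⟨t, htM, htne, w, hw1, hw2⟩ := hdom q hqM
    exact hQ (hMQ htM) hq htne w ⟨hw1, hw2⟩
  -- cardinalities
  have hS1T : Disjoint S1 T := by
    rw [Set.disjoint_left]
    rintro x ⟨a, ha, rfl⟩ hxT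
    exact hTR _ hxT (hS1Rg1 a ha)
  have hzT : z ∉ T := fun h => hTR z h hzRg1
  have hinj : Set.InjOn xf N := by
    intro a ha b hb heq
    by_contra hne
    exact aux_sqr hg ha (hxf a ha).1 hb (heq ▸ (hxf b hb).1) hne (Ne.symm (hxf a ha).2)
  have hcard1 : M1.ncard = S1.ncard + T.ncard :=
    Set.ncard_union_eq hS1T (Set.toFinite S1) (Set.toFinite T)
  have hcard2 : M2.ncard = T.ncard + 1 := Set.ncard_insert_of_notMem hzT (Set.toFinite T)
  have hcardS1 : S1.ncard = G.degree z := by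
    rw [hS1def, Set.ncard_image_of_injOn hinj, hNdef]
    rw [Set.ncard_eq_toFinset_card']
    rw [← card_neighborFinset_eq_degree]
    rw [neighborFinset_def]
  have hdeg := hδ z
  refine ⟨M1, M2, hMaxOf M1 hM1pack hM1dom, hMaxOf M2 hM2pack hM2dom, ?_⟩
  omega
end

section
/- Let G be a graph with girth at least 7 containing a path s_1 u_1 v u_2 s_2 such that s_1 and s_2 are support vertices and, for each i ∈ {1,2}, the vertex u_i is the only neighbor of s_i having degree at least 2. Then G has two maximal open packings of different cardinalities. -/
open SimpleGraph

private lemma noC3 {V : Type*} {G : SimpleGraph V} (hg : 7 ≤ G.egirth) {a b c : V}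
    (hab : G.Adj a b) (hbc : G.Adj b c) (hca : G.Adj c a) : False := by
  have hne1 : a ≠ b := hab.ne
  have hne2 : b ≠ c := hbc.ne
  have hne3 : c ≠ a := hca.ne
  let p : G.Walk b a := Walk.cons hbc (Walk.cons hca Walk.nil)
  have hc : (Walk.cons hab p).IsCycle := by
    rw [Walk.cons_isCycle_iff]
    constructor
    · simp [p, Walk.isPath_def, hne1, hne2, hne3, Ne.symm hne1, Ne.symm hne2, Ne.symm hne3]
    · simp [p, Sym2.eq, Sym2.rel_iff', hne1, hne2, hne3, Ne.symm hne1, Ne.symm hne2, Ne.symm hne3]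
  have := le_egirth.mp hg a _ hc
  rw [show (Walk.cons hab p).length = 3 by simp [p]] at this
  norm_num at this

private lemma noC4 {V : Type*} {G : SimpleGraph V} (hg : 7 ≤ G.egirth) {a b c d : V}
    (hac : a ≠ c) (hbd : b ≠ d)
    (hab : G.Adj a b) (hbc : G.Adj b c) (hcd : G.Adj c d) (hda : G.Adj d a) : False := by
  have hne1 : a ≠ b := hab.ne
  have hne2 : b ≠ c := hbc.ne
  have hne3 : c ≠ d := hcd.ne
  have hne4 : d ≠ a := hda.ne
  let p : G.Walk b a := Walk.cons hbc (Walk.cons hcd (Walk.cons hda Walk.nil))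
  have hc : (Walk.cons hab p).IsCycle := by
    rw [Walk.cons_isCycle_iff]
    constructor
    · simp [p, Walk.isPath_def, hne1, hne2, hne3, hne4, hac, hbd, Ne.symm hne1, Ne.symm hne2,
        Ne.symm hne3, Ne.symm hne4, Ne.symm hac, Ne.symm hbd]
    · simp [p, Sym2.eq, Sym2.rel_iff', hne1, hne2, hne3, hne4, hac, hbd, Ne.symm hne1,
        Ne.symm hne2, Ne.symm hne3, Ne.symm hne4, Ne.symm hac, Ne.symm hbd]
  have := le_egirth.mp hg a _ hc
  rw [show (Walk.cons hab p).length = 4 by simp [p]] at this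
  norm_num at this

private lemma exists_maximal_packing {V : Type*} [Fintype V] (G : SimpleGraph V) (P : Set V)
    (hP : IsOpenPacking G P) : ∃ M, P ⊆ M ∧ Maximal (IsOpenPacking G) M := by
  obtain ⟨M, hM, hmax⟩ := Set.Finite.exists_maximalFor (id : Set V → Set V)
    {M : Set V | IsOpenPacking G M ∧ P ⊆ M} (Set.toFinite _) ⟨P, hP, subset_rfl⟩
  exact ⟨M, hM.2, hM.1, fun N hN hMN => hmax ⟨hN, hM.2.trans hMN⟩ hMN⟩

theorem stmt14 {V : Type*} [Fintype V] (G : SimpleGraph V) [DecidableRel G.Adj]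
    (hg : 7 ≤ G.egirth) (s₁ u₁ v u₂ s₂ : V)
    (hnd : List.Nodup [s₁, u₁, v, u₂, s₂])
    (h1 : G.Adj s₁ u₁) (h2 : G.Adj u₁ v) (h3 : G.Adj v u₂) (h4 : G.Adj u₂ s₂)
    (hs₁ : IsSupport G s₁) (hs₂ : IsSupport G s₂)
    (hu₁ : ∀ x, G.Adj s₁ x → 2 ≤ G.degree x → x = u₁)
    (hu₂ : ∀ x, G.Adj s₂ x → 2 ≤ G.degree x → x = u₂) :
    ∃ P Q, Maximal (IsOpenPacking G) P ∧ Maximal (IsOpenPacking G) Q ∧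
      P.ncard ≠ Q.ncard := by
  simp only [List.nodup_cons, List.mem_cons, List.mem_singleton, List.not_mem_nil,
    List.nodup_nil, or_false, not_or, and_true] at hnd
  obtain ⟨⟨hs₁u₁, hs₁v, hs₁u₂, hs₁s₂⟩, ⟨hu₁v, hu₁u₂, hu₁s₂⟩, ⟨hvu₂, hvs₂⟩, hu₂s₂⟩ := hnd
  obtain ⟨l₁, hl₁⟩ := hs₁
  obtain ⟨l₂, hl₂⟩ := hs₂
  have hl₁only : ∀ y, G.Adj l₁ y → y = s₁ := fun y hy => by
    have : y ∈ G.neighborSet l₁ := hy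
    rwa [hl₁, Set.mem_singleton_iff] at this
  have hl₂only : ∀ y, G.Adj l₂ y → y = s₂ := fun y hy => by
    have : y ∈ G.neighborSet l₂ := hy
    rwa [hl₂, Set.mem_singleton_iff] at this
  -- structure of neighborhoods of s₁, s₂
  have hNs : ∀ s u : V, (∀ x, G.Adj s x → 2 ≤ G.degree x → x = u) →
      ∀ x, G.Adj s x → x = u ∨ ∀ y, G.Adj x y → y = s := by
    intro s u hu x hx
    by_cases hdeg : 2 ≤ G.degree x
    · exact Or.inl (hu x hx hdeg)
    · refine Or.inr fun y hy => ?_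
      have hcard : (G.neighborFinset x).card ≤ 1 := by
        rw [← G.card_neighborFinset_eq_degree x] at hdeg; omega
      exact Finset.card_le_one.mp hcard y ((G.mem_neighborFinset x y).mpr hy) s
        ((G.mem_neighborFinset x s).mpr hx.symm)
  have hNs₁ := hNs s₁ u₁ hu₁
  have hNs₂ := hNs s₂ u₂ hu₂
  -- girth consequences
  have hvns₁ : ¬ G.Adj v s₁ := fun h => noC3 hg h1 h2 h
  have hvns₂ : ¬ G.Adj v s₂ := fun h => noC3 hg h4.symm h3.symm h
  have hu₁ns₂ : ¬ G.Adj u₁ s₂ := fun h => noC4 hg hu₁u₂ hvs₂ h2 h3 h4 h.symm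
  -- the packing Q₀ = {l₁, l₂, v}
  have ncn_l₁v : ∀ w, ¬(G.Adj l₁ w ∧ G.Adj v w) := by
    rintro w ⟨hw1, hw2⟩
    exact hvns₁ ((hl₁only w hw1) ▸ hw2)
  have ncn_l₂v : ∀ w, ¬(G.Adj l₂ w ∧ G.Adj v w) := by
    rintro w ⟨hw1, hw2⟩
    exact hvns₂ ((hl₂only w hw1) ▸ hw2)
  have ncn_l₁l₂ : ∀ w, ¬(G.Adj l₁ w ∧ G.Adj l₂ w) := by
    rintro w ⟨hw1, hw2⟩
    exact hs₁s₂ ((hl₁only w hw1) ▸ (hl₂only w hw2))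
  have hQ₀ : IsOpenPacking G ({l₁, l₂, v} : Set V) := by
    rintro a (rfl | rfl | rfl) b (rfl | rfl | rfl) hne w hw
    · exact hne rfl
    · exact ncn_l₁l₂ w hw
    · exact ncn_l₁v w hw
    · exact ncn_l₁l₂ w ⟨hw.2, hw.1⟩
    · exact hne rfl
    · exact ncn_l₂v w hw
    · exact ncn_l₁v w ⟨hw.2, hw.1⟩
    · exact ncn_l₂v w ⟨hw.2, hw.1⟩
    · exact hne rfl
  obtain ⟨Q, hQ₀Q, hQmax⟩ := exists_maximal_packing G _ hQ₀
  have hvQ : v ∈ Q := hQ₀Q (by simp)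
  have hs₁Q : s₁ ∉ Q := fun h => hQmax.prop h hvQ hs₁v u₁ ⟨h1, h2.symm⟩
  have hs₂Q : s₂ ∉ Q := fun h => hQmax.prop h hvQ (Ne.symm hvs₂) u₂ ⟨h4.symm, h3⟩
  -- s₁ and s₂ have no common neighbor with members of Q \ {v}, nor with each other
  have C₁ : ∀ q, q ∈ Q → q ≠ v → ∀ w, ¬(G.Adj s₁ w ∧ G.Adj q w) := by
    rintro q hq hqv w ⟨hw1, hw2⟩
    rcases hNs₁ w hw1 with hwu | hleaf
    · exact hQmax.prop hq hvQ hqv u₁ ⟨hwu ▸ hw2, h2.symm⟩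
    · exact hs₁Q ((hleaf q hw2.symm) ▸ hq)
  have C₂ : ∀ q, q ∈ Q → q ≠ v → ∀ w, ¬(G.Adj s₂ w ∧ G.Adj q w) := by
    rintro q hq hqv w ⟨hw1, hw2⟩
    rcases hNs₂ w hw1 with hwu | hleaf
    · exact hQmax.prop hq hvQ hqv u₂ ⟨hwu ▸ hw2, h3⟩
    · exact hs₂Q ((hleaf q hw2.symm) ▸ hq)
  have ncn_s₁s₂ : ∀ w, ¬(G.Adj s₁ w ∧ G.Adj s₂ w) := by
    rintro w ⟨hw1, hw2⟩
    rcases hNs₁ w hw1 with hwu | hleaf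
    · exact hu₁ns₂ (hwu ▸ hw2).symm
    · exact hs₁s₂ (hleaf s₂ hw2.symm).symm
  -- the packing P₀ = {s₁, s₂} ∪ (Q \ {v})
  set P₀ : Set V := insert s₁ (insert s₂ (Q \ {v})) with hP₀def
  have hP₀ : IsOpenPacking G P₀ := by
    rintro a (rfl | rfl | ⟨haQ, hav⟩) b (rfl | rfl | ⟨hbQ, hbv⟩) hne w hw
    · exact hne rfl
    · exact ncn_s₁s₂ w hw
    · exact C₁ b hbQ hbv w hw
    · exact ncn_s₁s₂ w ⟨hw.2, hw.1⟩
    · exact hne rfl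
    · exact C₂ b hbQ hbv w hw
    · exact C₁ a haQ hav w ⟨hw.2, hw.1⟩
    · exact C₂ a haQ hav w ⟨hw.2, hw.1⟩
    · exact hQmax.prop haQ hbQ hne w hw
  obtain ⟨M, hP₀M, hMmax⟩ := exists_maximal_packing G _ hP₀
  refine ⟨M, Q, hMmax, hQmax, ?_⟩
  have hQcard : (Q \ {v}).ncard + 1 = Q.ncard :=
    Set.ncard_diff_singleton_add_one hvQ (Set.toFinite Q)
  have hs₂mem : s₂ ∉ Q \ {v} := fun h => hs₂Q h.1
  have hs₁mem : s₁ ∉ insert s₂ (Q \ {v}) := by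
    rintro (rfl | h)
    · exact hs₁s₂ rfl
    · exact hs₁Q h.1
  have hP₀card : P₀.ncard = (Q \ {v}).ncard + 2 := by
    rw [hP₀def, Set.ncard_insert_of_notMem hs₁mem (Set.toFinite _),
      Set.ncard_insert_of_notMem hs₂mem (Set.toFinite _)]
  have hM : P₀.ncard ≤ M.ncard := Set.ncard_le_ncard hP₀M (Set.toFinite M)
  omega
end
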